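/- arXiv:0906.2470 — 6 statements merged into one kernel-verified Lean document; each statement's English description precedes it below -/
import Mathlib

section
/- For every m ≥ 1 and n > m, the number of ordered m-forests on a set of n labeled leaves equals (2n-m-1)! · m / ((n-m)! · 2^(n-m)); moreover the number of ordered m-forests on a set of m labeled leaves equals m!. -/
/-- Plane binary trees with ℕ-labeled leaves. -/
inductive BTree : Type
  | leaf : ℕ → BTree
  | node : BTree → BTree → BTree

namespace BTree

/-- Multiset of leaf labels. -/
def leaves : BTree → Multiset ℕ
  | leaf i => {i}
  | node l r => leaves l + leaves r

/-- Depth of the leaf labeled `i` (junk if `i` is not a leaf label). -/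
def dep : BTree → ℕ → ℕ
  | leaf _, _ => 0
  | node l r, i => if i ∈ leaves l then dep l i + 1 else dep r i + 1

/-- Path length (number of edges) between the leaves labeled `i` and `j`. -/
def dist : BTree → ℕ → ℕ → ℕ
  | leaf _, _, _ => 0
  | node l r, i, j =>
    if i ∈ leaves l ∧ j ∈ leaves l then dist l i j
    else if i ∈ leaves r ∧ j ∈ leaves r then dist r i j
    else (if i ∈ leaves l then dep l i + 1 else dep r i + 1)
       + (if j ∈ leaves l then dep l j + 1 else dep r j + 1)

/-- Isomorphism of leaf-labeled binary trees: generated by swapping the two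
children of any node, preserving leaf labels. -/
inductive Iso : BTree → BTree → Prop
  | leaf (i : ℕ) : Iso (leaf i) (leaf i)
  | node {l r l' r'} : Iso l l' → Iso r r' → Iso (node l r) (node l' r')
  | swap {l r l' r'} : Iso l r' → Iso r l' → Iso (node l r) (node l' r')

end BTree

/-- A valid fully resolved rooted phylogenetic tree on the leaf set {1,…,n}:
the multiset of leaf labels is exactly {1,…,n} (each label occurring once). -/
def BTree.valid (n : ℕ) (t : BTree) : Prop := t.leaves = (Finset.Icc 1 n).val

/-- The type of fully resolved rooted phylogenetic trees on {1,…,n}, up to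
label-preserving isomorphism. -/
def PhyloTree (n : ℕ) : Type :=
  Quot (fun a b : {t : BTree // t.valid n} => BTree.Iso a.1 b.1)

/-- The path length between leaves `i` and `j` of a phylogenetic tree,
computed on a representative. -/
noncomputable def pdist {n : ℕ} (T : PhyloTree n) (i j : ℕ) : ℕ :=
  BTree.dist T.out.1 i j

/-- Double factorial: `df n = n‼`. -/
def df : ℕ → ℕ
  | 0 => 1
  | 1 => 1
  | n + 2 => (n + 2) * df n

/-- Rising factorial (Pochhammer symbol) `(a)_k = a(a+1)⋯(a+k-1)`. -/
def rf (a : ℝ) : ℕ → ℝ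
  | 0 => 1
  | k + 1 => rf a k * (a + k)

/-- The type of ordered m-forests on the leaf set {1,…,n}, up to
label-preserving isomorphism of each component tree. -/
def PhyloForest (m n : ℕ) : Type :=
  Quot (fun f g : {f : Fin m → BTree //
      (∑ i : Fin m, (f i).leaves) = (Finset.Icc 1 n).val} =>
    ∀ i, BTree.Iso (f.1 i) (g.1 i))

namespace BTree

/-- Minimum leaf label. -/
def mn : BTree → ℕ
  | leaf i => i
  | node l r => min (mn l) (mn r)

/-- Canonical form: order children by minimum label. -/
def norm : BTree → BTree
  | leaf i => leaf i
  | node l r => if mn l ≤ mn r then node (norm l) (norm r) else node (norm r) (norm l)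

lemma mn_mem : ∀ t : BTree, mn t ∈ leaves t
  | leaf i => by simp [mn, leaves]
  | node l r => by
    rcases le_total (mn l) (mn r) with h | h
    · simpa [mn, leaves, min_eq_left h] using Or.inl (mn_mem l)
    · simpa [mn, leaves, min_eq_right h] using Or.inr (mn_mem r)

lemma mn_le : ∀ (t : BTree), ∀ x ∈ leaves t, mn t ≤ x
  | leaf i => by simp [mn, leaves]
  | node l r => by
    intro x hx
    simp only [leaves, Multiset.mem_add] at hx
    rcases hx with hx | hx
    · exact le_trans (min_le_left _ _) (mn_le l x hx)
    · exact le_trans (min_le_right _ _) (mn_le r x hx)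

lemma mn_congr {a b : BTree} (h : leaves a = leaves b) : mn a = mn b :=
  le_antisymm (mn_le a _ (h ▸ mn_mem b)) (mn_le b _ (h.symm ▸ mn_mem a))

lemma leaves_norm : ∀ t : BTree, (norm t).leaves = t.leaves
  | leaf i => rfl
  | node l r => by
    by_cases h : mn l ≤ mn r <;>
      simp [norm, h, leaves, leaves_norm l, leaves_norm r, add_comm]

lemma mn_norm (t : BTree) : mn (norm t) = mn t := mn_congr (leaves_norm t)

lemma norm_norm : ∀ t : BTree, norm (norm t) = norm t
  | leaf i => rfl
  | node l r => by
    rcases le_or_gt (mn l) (mn r) with h | h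
    · simp [norm, h, mn_norm, norm_norm l, norm_norm r]
    · simp [norm, h, not_le.2 h, mn_norm, h.le, norm_norm l, norm_norm r]

lemma iso_norm : ∀ t : BTree, Iso t (norm t)
  | leaf i => Iso.leaf i
  | node l r => by
    by_cases h : mn l ≤ mn r
    · simpa [norm, h] using Iso.node (iso_norm l) (iso_norm r)
    · simpa [norm, h] using Iso.swap (iso_norm l) (iso_norm r)

lemma Iso.symm {a b : BTree} (h : Iso a b) : Iso b a := by
  induction h with
  | leaf i => exact Iso.leaf i
  | node h1 h2 ih1 ih2 => exact Iso.node ih1 ih2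
  | swap h1 h2 ih1 ih2 => exact Iso.swap ih2 ih1

lemma Iso.leaves_eq {a b : BTree} (h : Iso a b) : leaves a = leaves b := by
  induction h with
  | leaf i => rfl
  | node h1 h2 ih1 ih2 => simp [leaves, ih1, ih2]
  | swap h1 h2 ih1 ih2 => simp [leaves, ih1, ih2, add_comm]

lemma mn_ne {l r : BTree} (hd : Disjoint (leaves l) (leaves r)) : mn l ≠ mn r := by
  intro h
  exact Multiset.disjoint_left.mp hd (mn_mem l) (h ▸ mn_mem r)

lemma iso_norm_eq {a b : BTree} (h : Iso a b) (hn : (leaves a).Nodup) : norm a = norm b := by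
  induction h with
  | leaf i => rfl
  | node h1 h2 ih1 ih2 =>
    rw [leaves, Multiset.nodup_add] at hn
    have e1 := mn_congr h1.leaves_eq
    have e2 := mn_congr h2.leaves_eq
    simp only [norm, ih1 hn.1, ih2 hn.2.1, e1, e2]
  | @swap l r l' r' h1 h2 ih1 ih2 =>
    rw [leaves, Multiset.nodup_add] at hn
    have e1 := mn_congr h1.leaves_eq
    have e2 := mn_congr h2.leaves_eq
    have hne : mn l ≠ mn r := mn_ne hn.2.2
    rcases hne.lt_or_gt with h | h
    · simp only [norm, if_pos h.le, ← e1, ← e2, if_neg (not_le.2 h), ih1 hn.1, ih2 hn.2.1]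
    · simp only [norm, if_neg (not_le.2 h), ← e1, ← e2, if_pos h.le, ih1 hn.1, ih2 hn.2.1]

lemma canon_node_iff {l r : BTree} :
    norm (node l r) = node l r ↔ norm l = l ∧ norm r = r ∧ mn l ≤ mn r := by
  constructor
  · intro h
    by_cases hc : mn l ≤ mn r
    · rw [norm, if_pos hc] at h
      exact ⟨(node.injEq _ _ _ _).mp h |>.1, (node.injEq _ _ _ _).mp h |>.2, hc⟩
    · rw [norm, if_neg hc] at h
      obtain ⟨h1, h2⟩ := (node.injEq _ _ _ _).mp h
      have : mn r = mn l := by rw [← h2, mn_norm]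
      exact (hc this.ge).elim
  · rintro ⟨h1, h2, h3⟩
    rw [norm, if_pos h3, h1, h2]

lemma card_leaves_pos (t : BTree) : 0 < Multiset.card (leaves t) :=
  Multiset.card_pos_iff_exists_mem.2 ⟨mn t, mn_mem t⟩

lemma leaves_ne_zero (t : BTree) : leaves t ≠ 0 := by
  intro h
  simpa [h] using card_leaves_pos t

end BTree

open BTree

/-- Canonical trees with leaf set `s`. -/
def CT (s : Finset ℕ) : Type := {t : BTree // t.leaves = s.val ∧ norm t = t}

/-- Canonical ordered forests with total leaf set `s`. -/
def FC (m : ℕ) (s : Finset ℕ) : Type :=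
  {f : Fin m → BTree // (∑ i, (f i).leaves) = s.val ∧ ∀ i, norm (f i) = f i}

noncomputable def forestEquiv (m n : ℕ) : PhyloForest m n ≃ FC m (Finset.Icc 1 n) where
  toFun := Quot.lift
    (fun f => (⟨fun i => norm (f.1 i),
      by simp only [leaves_norm]; exact f.2,
      fun i => norm_norm _⟩ : FC m (Finset.Icc 1 n)))
    (by
      intro f g h
      refine Subtype.ext (funext fun i => ?_)
      refine iso_norm_eq (h i) ?_
      have hle : (f.1 i).leaves ≤ ∑ j, (f.1 j).leaves :=
        Finset.single_le_sum (f := fun j => (f.1 j).leaves)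
          (fun j _ => zero_le) (Finset.mem_univ i)
      rw [f.2] at hle
      exact Multiset.nodup_of_le hle (Finset.Icc 1 n).nodup)
  invFun g := Quot.mk _ ⟨g.1, g.2.1⟩
  left_inv := fun q => by
    induction q using Quot.ind with
    | _ f => exact Quot.sound (fun i => (iso_norm (f.1 i)).symm)
  right_inv g := Subtype.ext (funext fun i => g.2.2 i)

lemma natCard_sigma {ι : Type*} [Fintype ι] (f : ι → Type*) [∀ i, Finite (f i)] :
    Nat.card (Σ i, f i) = ∑ i, Nat.card (f i) := by
  letI : ∀ i, Fintype (f i) := fun i => Fintype.ofFinite _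
  simp [Nat.card_eq_fintype_card, Fintype.card_sigma]

def buildTree (s : Finset ℕ) (hs : s.Nonempty)
    (p : Σ A : {A : Finset ℕ // A ∈ s.powerset.filter (fun A => s.min' hs ∈ A)},
      CT A.1 × CT (s \ A.1)) : CT s := by
  obtain ⟨⟨A, hA⟩, ⟨l, hl, hln⟩, ⟨r, hr, hrn⟩⟩ := p
  simp only [Finset.mem_filter, Finset.mem_powerset] at hA
  refine ⟨node l r, ?_, ?_⟩
  · rw [leaves, hl, hr, Finset.sdiff_val, add_tsub_cancel_of_le (Finset.val_le_iff.2 hA.1)]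
  · refine canon_node_iff.2 ⟨hln, hrn, ?_⟩
    have h1 : mn l ≤ s.min' hs := mn_le l _ (hl ▸ (by exact_mod_cast hA.2 : s.min' hs ∈ A.val))
    have h2 : s.min' hs ≤ mn r := by
      have : mn r ∈ (s \ A).val := hr ▸ mn_mem r
      exact s.min'_le _ (Finset.mem_sdiff.1 this).1
    exact h1.trans h2

lemma buildTree_bijective (s : Finset ℕ) (hs : s.Nonempty) (hcard : 2 ≤ s.card) :
    Function.Bijective (buildTree s hs) := by
  constructor
  · rintro ⟨⟨A, hA⟩, ⟨l, hl, hln⟩, ⟨r, hr, hrn⟩⟩ ⟨⟨A', hA'⟩, ⟨l', hl', hln'⟩, ⟨r', hr', hrn'⟩⟩ h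
    simp only [buildTree, Subtype.mk.injEq, node.injEq] at h
    obtain ⟨rfl, rfl⟩ := h
    obtain rfl : A = A' := Finset.val_inj.1 (by rw [← hl, ← hl'])
    rfl
  · rintro ⟨t, ht, htn⟩
    match t, ht, htn with
    | leaf i, ht, htn =>
      exfalso
      have : Multiset.card s.val = 1 := by rw [← ht]; rfl
      rw [Finset.card_def] at hcard; omega
    | node l r, ht, htn =>
      obtain ⟨hln, hrn, hle⟩ := canon_node_iff.1 htn
      rw [leaves] at ht
      have hnd : (leaves l + leaves r).Nodup := ht ▸ s.nodup
      rw [Multiset.nodup_add] at hnd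
      have hAval : (leaves l).toFinset.val = leaves l := by
        rw [Multiset.toFinset_val, Multiset.Nodup.dedup hnd.1]
      set A := (leaves l).toFinset with hA
      have hsub : A ⊆ s := by
        rw [← Finset.val_le_iff, hAval, ← ht]
        exact Multiset.le_add_right _ _
      have hmem : s.min' hs ∈ A := by
        have h0 : s.min' hs ∈ s.val := s.min'_mem hs
        rw [← ht, Multiset.mem_add] at h0
        rcases h0 with h0 | h0
        · rwa [← Multiset.mem_toFinset] at h0
        · exfalso
          have h1 : s.min' hs ≤ mn l := by
            refine s.min'_le _ ?_
            have : mn l ∈ s.val := ht ▸ (Multiset.mem_add.2 (Or.inl (mn_mem l)))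
            exact this
          have h2 : mn r ≤ s.min' hs := mn_le r _ h0
          exact mn_ne hnd.2.2 (le_antisymm hle (h2.trans h1))
      have hrval : leaves r = (s \ A).val := by
        rw [Finset.sdiff_val, hAval, ← ht, add_tsub_cancel_left]
      refine ⟨⟨⟨A, Finset.mem_filter.2 ⟨Finset.mem_powerset.2 hsub, hmem⟩⟩,
        ⟨l, hAval.symm, hln⟩, ⟨r, hrval, hrn⟩⟩, ?_⟩
      simp only [buildTree]; rfl

/-- Number of canonical (phylogenetic) trees on `k` labeled leaves: `(2k-3)!!`. -/
def ahat : ℕ → ℕ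
  | 0 => 0
  | k + 1 => df (2 * k - 1)

lemma df_odd (k : ℕ) : df (2 * k + 1) = (2 * k + 1) * df (2 * k - 1) := by
  cases k with
  | zero => rfl
  | succ k =>
    have h1 : 2 * (k + 1) + 1 = (2 * k + 1) + 2 := by ring
    have h2 : 2 * (k + 1) - 1 = 2 * k + 1 := by omega
    rw [h1, h2, df]

open Nat in
lemma catalan_ratio (k : ℕ) : (k + 2) * catalan (k + 1) = 2 * (2 * k + 1) * catalan k := by
  have h1 : (k + 1) * ((k + 2) * catalan (k + 1)) = (k + 1) * (2 * (2 * k + 1) * catalan k) := by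
    calc (k + 1) * ((k + 2) * catalan (k + 1)) = (k + 1) * (k + 1).centralBinom := by
          rw [succ_mul_catalan_eq_centralBinom]
      _ = 2 * (2 * k + 1) * k.centralBinom := succ_mul_centralBinom_succ k
      _ = 2 * (2 * k + 1) * ((k + 1) * catalan k) := by rw [succ_mul_catalan_eq_centralBinom]
      _ = (k + 1) * (2 * (2 * k + 1) * catalan k) := by ring
  exact Nat.eq_of_mul_eq_mul_left (by omega) h1

open Nat in
lemma ahat_two_pow : ∀ k, ahat (k + 1) * 2 ^ k = (k + 1).factorial * catalan k := by
  intro k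
  induction k with
  | zero => simp [ahat, df]
  | succ k ih =>
    have h : ahat (k + 2) = (2 * k + 1) * ahat (k + 1) := by
      show df (2 * (k + 1) - 1) = (2 * k + 1) * df (2 * k - 1)
      have : 2 * (k + 1) - 1 = 2 * k + 1 := by omega
      rw [this, df_odd]
    calc ahat (k + 2) * 2 ^ (k + 1) = 2 * (2 * k + 1) * (ahat (k + 1) * 2 ^ k) := by
          rw [h]; ring
      _ = 2 * (2 * k + 1) * ((k + 1).factorial * catalan k) := by rw [ih]
      _ = (k + 1).factorial * (2 * (2 * k + 1) * catalan k) := by ring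
      _ = (k + 1).factorial * ((k + 2) * catalan (k + 1)) := by rw [catalan_ratio]
      _ = (k + 2).factorial * catalan (k + 1) := by rw [Nat.factorial_succ (k + 1)]; ring

open Nat Finset in
lemma catalan_succ_range (j : ℕ) :
    catalan (j + 1) = ∑ i ∈ range (j + 1), catalan i * catalan (j - i) := by
  rw [catalan_succ, Finset.sum_range]

open Nat Finset in
lemma catalan_conv_weighted (k : ℕ) :
    2 * ∑ j ∈ range (k + 1), (j + 1) * (catalan j * catalan (k - j)) =
      (k + 2) * catalan (k + 1) := by
  have hrefl := Finset.sum_range_reflect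
    (fun j => (j + 1) * (catalan j * catalan (k - j))) (k + 1)
  have hsum : ∑ j ∈ range (k + 1), (j + 1) * (catalan j * catalan (k - j))
      + ∑ j ∈ range (k + 1), (j + 1) * (catalan j * catalan (k - j))
      = ∑ j ∈ range (k + 1), (k + 2) * (catalan j * catalan (k - j)) := by
    nth_rewrite 1 [← hrefl]
    rw [← Finset.sum_add_distrib]
    refine Finset.sum_congr rfl fun j hj => ?_
    rw [Finset.mem_range] at hj
    have h1 : k + 1 - 1 - j = k - j := by omega
    have h2 : k - (k - j) = j := by omega
    rw [h1, h2, mul_comm (catalan (k - j)) (catalan j)]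
    have : (k - j + 1) + (j + 1) = k + 2 := by omega
    rw [← add_mul, this]
  rw [two_mul, hsum, ← Finset.mul_sum, ← catalan_succ_range]

open Nat Finset in
lemma ahat_rec (k : ℕ) :
    ∑ j ∈ range (k + 2), (k + 1).choose j * (ahat (j + 1) * ahat (k + 1 - j)) =
      ahat (k + 2) := by
  refine Nat.eq_of_mul_eq_mul_right (Nat.pow_pos (n := k+1) (by norm_num) : 0 < 2 ^ (k+1)) ?_
  rw [Finset.sum_mul]
  have hterm : ∀ j ∈ range (k + 2),
      (k + 1).choose j * (ahat (j + 1) * ahat (k + 1 - j)) * 2 ^ (k + 1) =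
        if j = k + 1 then 0 else 2 * ((k+1).factorial * ((j + 1) * (catalan j * catalan (k - j)))) := by
    intro j hj
    rw [Finset.mem_range] at hj
    by_cases hjk : j = k + 1
    · subst hjk; simp [ahat]
    · rw [if_neg hjk]
      have hj' : j ≤ k := by omega
      have e1 : k + 1 - j = (k - j) + 1 := by omega
      have e2 : 2 ^ (k + 1) = 2 ^ j * 2 ^ (k - j) * 2 := by
        rw [← pow_add, ← pow_succ]; congr 1; omega
      calc (k + 1).choose j * (ahat (j + 1) * ahat (k + 1 - j)) * 2 ^ (k + 1)
          = (k + 1).choose j * ((ahat (j + 1) * 2 ^ j) * (ahat ((k - j) + 1) * 2 ^ (k - j))) * 2 := by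
            rw [e1, e2]; ring
        _ = (k + 1).choose j * ((j + 1).factorial * catalan j * ((k - j + 1).factorial * catalan (k - j))) * 2 := by
            rw [ahat_two_pow, ahat_two_pow]
        _ = ((k + 1).choose j * (j + 1).factorial * (k - j + 1).factorial) * (catalan j * catalan (k - j)) * 2 := by
            ring
        _ = ((j + 1) * (k + 1).factorial) * (catalan j * catalan (k - j)) * 2 := by
            congr 2
            have e3 : k - j + 1 = (k + 1) - j := by omega
            rw [Nat.factorial_succ j, e3]
            calc (k + 1).choose j * ((j + 1) * j.factorial) * (k + 1 - j).factorial
                = (j + 1) * ((k + 1).choose j * j.factorial * (k + 1 - j).factorial) := by ring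
              _ = (j + 1) * (k + 1).factorial := by
                  rw [Nat.choose_mul_factorial_mul_factorial (by omega : j ≤ k + 1)]
        _ = 2 * ((k+1).factorial * ((j + 1) * (catalan j * catalan (k - j)))) := by ring
  rw [Finset.sum_congr rfl hterm, Finset.sum_range_succ, if_pos rfl, add_zero,
    Finset.sum_congr rfl (fun j hj => if_neg (by rw [Finset.mem_range] at hj; omega)),
    ← Finset.mul_sum, ← Finset.mul_sum, mul_left_comm, catalan_conv_weighted,
    ahat_two_pow (k + 1), Nat.factorial_succ (k + 1)]
  ring

instance CT_empty_isEmpty : IsEmpty (CT ∅) :=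
  ⟨fun t => leaves_ne_zero t.1 (by simpa using t.2.1)⟩

instance CT_singleton_unique (i : ℕ) : Unique (CT {i}) where
  default := ⟨leaf i, by simp [leaves], rfl⟩
  uniq := by
    rintro ⟨t, ht, htn⟩
    match t, ht, htn with
    | leaf j, ht, htn =>
      have : j = i := by simpa [leaves] using ht
      subst this; rfl
    | node l r, ht, htn =>
      exfalso
      have h1 := card_leaves_pos l
      have h2 := card_leaves_pos r
      have : Multiset.card (leaves (node l r)) = 1 := by rw [ht]; rfl
      rw [leaves, Multiset.card_add] at this
      omega

theorem CT_card (s : Finset ℕ) : Nat.card (CT s) = ahat s.card ∧ Finite (CT s) := by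
  generalize hn : s.card = n
  induction n using Nat.strong_induction_on generalizing s with
  | _ n ih =>
    match n, hn with
    | 0, hn =>
      obtain rfl : s = ∅ := Finset.card_eq_zero.1 hn
      exact ⟨by simp [Nat.card_of_isEmpty, ahat], inferInstance⟩
    | 1, hn =>
      obtain ⟨i, rfl⟩ := Finset.card_eq_one.1 hn
      exact ⟨Nat.card_unique, inferInstance⟩
    | (k+2), hn =>
      have hs : s.Nonempty := Finset.card_pos.1 (by omega)
      have key : ∀ A ∈ s.powerset.filter (fun A => s.min' hs ∈ A),
          Finite (CT A × CT (s \ A)) ∧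
          Nat.card (CT A × CT (s \ A)) = ahat A.card * ahat (s.card - A.card) := by
        intro A hA
        rw [Finset.mem_filter, Finset.mem_powerset] at hA
        by_cases hAs : A = s
        · subst hAs
          rw [Finset.sdiff_self]
          haveI : IsEmpty (CT A × CT (∅ : Finset ℕ)) :=
            ⟨fun p => CT_empty_isEmpty.false p.2⟩
          refine ⟨inferInstance, ?_⟩
          rw [Nat.card_of_isEmpty, Nat.sub_self, ahat, mul_zero]
        · have hAlt : A.card < s.card := Finset.card_lt_card (hA.1.ssubset_of_ne hAs)
          have hApos : 0 < A.card := Finset.card_pos.2 ⟨_, hA.2⟩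
          have hsd : (s \ A).card = s.card - A.card := Finset.card_sdiff_of_subset hA.1
          obtain ⟨c1, f1⟩ := ih A.card (hn ▸ hAlt) A rfl
          obtain ⟨c2, f2⟩ := ih (s \ A).card (by omega) (s \ A) rfl
          haveI := f1; haveI := f2
          refine ⟨inferInstance, ?_⟩
          rw [Nat.card_prod, c1, c2, hsd]
      haveI hfib : ∀ A : {A // A ∈ s.powerset.filter (fun A => s.min' hs ∈ A)},
          Finite (CT A.1 × CT (s \ A.1)) := fun A => (key A.1 A.2).1
      have hequiv : (Σ A : {A // A ∈ s.powerset.filter (fun A => s.min' hs ∈ A)},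
          CT A.1 × CT (s \ A.1)) ≃ CT s :=
        Equiv.ofBijective _ (buildTree_bijective s hs (by omega))
      refine ⟨?_, Finite.of_equiv _ hequiv⟩
      rw [← Nat.card_congr hequiv]
      rw [natCard_sigma]
      rw [Finset.sum_coe_sort _ (fun A => Nat.card (CT A × CT (s \ A)))]
      rw [Finset.sum_congr rfl (fun A hA => (key A hA).2)]
      -- reindex by erasing the minimum
      have hmin : s.min' hs ∈ s := s.min'_mem hs
      have hbij : ∑ A ∈ s.powerset.filter (fun A => s.min' hs ∈ A),
          ahat A.card * ahat (s.card - A.card)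
          = ∑ B ∈ (s.erase (s.min' hs)).powerset,
              ahat (B.card + 1) * ahat (s.card - (B.card + 1)) := by
        refine Finset.sum_nbij' (fun A => A.erase (s.min' hs))
          (fun B => insert (s.min' hs) B) ?_ ?_ ?_ ?_ ?_
        · intro A hA
          rw [Finset.mem_filter, Finset.mem_powerset] at hA
          exact Finset.mem_powerset.2 (Finset.erase_subset_erase _ hA.1)
        · intro B hB
          rw [Finset.mem_powerset] at hB
          refine Finset.mem_filter.2 ⟨Finset.mem_powerset.2 ?_, Finset.mem_insert_self _ _⟩
          exact Finset.insert_subset hmin (hB.trans (Finset.erase_subset _ _))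
        · intro A hA
          rw [Finset.mem_filter] at hA
          exact Finset.insert_erase hA.2
        · intro B hB
          rw [Finset.mem_powerset] at hB
          exact Finset.erase_insert (fun hc => (Finset.notMem_erase _ _) (hB hc))
        · intro A hA
          rw [Finset.mem_filter] at hA
          rw [Finset.card_erase_add_one hA.2]
      rw [hbij, Finset.sum_powerset_apply_card
        (fun j => ahat (j + 1) * ahat (s.card - (j + 1)))]
      have hce : (s.erase (s.min' hs)).card = k + 1 := by
        rw [Finset.card_erase_of_mem hmin]; omega
      rw [hce]
      have : ∀ j ∈ Finset.range (k + 2),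
          (k + 1).choose j • (ahat (j + 1) * ahat (s.card - (j + 1)))
          = (k + 1).choose j * (ahat (j + 1) * ahat (k + 1 - j)) := by
        intro j hj
        have he : s.card - (j + 1) = k + 1 - j := by omega
        rw [smul_eq_mul, he]
      rw [Finset.sum_congr rfl this, ahat_rec]

/-- One step of the forest-count recurrence. -/
def qstep (g : ℕ → ℕ) (k : ℕ) : ℕ :=
  ∑ j ∈ Finset.range (k + 1), k.choose j * (ahat j * g (k - j))

/-- Number of canonical ordered m-forests on k labeled leaves. -/
def Qhat : ℕ → ℕ → ℕ
  | 0 => fun k => if k = 0 then 1 else 0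
  | m + 1 => qstep (Qhat m)

def buildForest (m : ℕ) (s : Finset ℕ)
    (p : Σ A : {A : Finset ℕ // A ∈ s.powerset}, CT A.1 × FC m (s \ A.1)) :
    FC (m + 1) s :=
  ⟨Fin.cons p.2.1.1 p.2.2.1, by
    obtain ⟨⟨A, hA⟩, ⟨t, ht, htn⟩, ⟨f, hf, hfn⟩⟩ := p
    rw [Finset.mem_powerset] at hA
    rw [Fin.sum_univ_succ]
    simp only [Fin.cons_zero, Fin.cons_succ]
    rw [ht, hf, Finset.sdiff_val, add_tsub_cancel_of_le (Finset.val_le_iff.2 hA)], by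
    obtain ⟨⟨A, hA⟩, ⟨t, ht, htn⟩, ⟨f, hf, hfn⟩⟩ := p
    intro i
    refine Fin.cases ?_ ?_ i
    · simpa using htn
    · intro j; simpa using hfn j⟩

lemma buildForest_bijective (m : ℕ) (s : Finset ℕ) :
    Function.Bijective (buildForest m s) := by
  constructor
  · rintro ⟨⟨A, hA⟩, ⟨t, ht, htn⟩, ⟨f, hf, hfn⟩⟩ ⟨⟨A', hA'⟩, ⟨t', ht', htn'⟩, ⟨f', hf', hfn'⟩⟩ h
    have h' : (Fin.cons t f : Fin (m + 1) → BTree) = Fin.cons t' f' :=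
      congrArg Subtype.val h
    have h0 : t = t' := by
      have := congrFun h' 0; simpa using this
    have h1 : f = f' := by
      funext j
      have := congrFun h' j.succ; simpa using this
    subst h0; subst h1
    obtain rfl : A = A' := Finset.val_inj.1 (by rw [← ht, ← ht'])
    rfl
  · rintro ⟨f, hf, hfn⟩
    have hle : (f 0).leaves ≤ s.val := by
      rw [← hf, Fin.sum_univ_succ]
      exact Multiset.le_add_right _ _
    have hnd : (f 0).leaves.Nodup := Multiset.nodup_of_le hle s.nodup
    have hAval : (f 0).leaves.toFinset.val = (f 0).leaves := by
      rw [Multiset.toFinset_val, Multiset.Nodup.dedup hnd]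
    set A := (f 0).leaves.toFinset with hA
    have hsub : A ⊆ s := by rw [← Finset.val_le_iff, hAval]; exact hle
    have htail : (∑ i, (f (Fin.succ i)).leaves) = (s \ A).val := by
      rw [Finset.sdiff_val, hAval, ← hf, Fin.sum_univ_succ, add_tsub_cancel_left]
    refine ⟨⟨⟨A, Finset.mem_powerset.2 hsub⟩,
      ⟨f 0, hAval.symm, hfn 0⟩,
      ⟨fun i => f (Fin.succ i), htail, fun i => hfn _⟩⟩, ?_⟩
    exact Subtype.ext (Fin.cons_self_tail f)

theorem FC_card (m : ℕ) : ∀ s : Finset ℕ,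
    Nat.card (FC m s) = Qhat m s.card ∧ Finite (FC m s) := by
  induction m with
  | zero =>
    intro s
    by_cases hs : s = ∅
    · subst hs
      haveI : Unique (FC 0 ∅) :=
        { default := ⟨Fin.elim0, by simp, fun i => i.elim0⟩
          uniq := fun f => Subtype.ext (funext fun i => i.elim0) }
      exact ⟨by simp [Nat.card_unique, Qhat], inferInstance⟩
    · haveI : IsEmpty (FC 0 s) := by
        refine ⟨fun f => hs ?_⟩
        have := f.2.1
        rw [Fin.sum_univ_zero] at this
        exact Finset.val_eq_zero.1 this.symm
      refine ⟨?_, inferInstance⟩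
      rw [Nat.card_of_isEmpty]
      have : s.card ≠ 0 := fun h => hs (Finset.card_eq_zero.1 h)
      simp [Qhat, this]
  | succ m ih =>
    intro s
    have key : ∀ A ∈ s.powerset,
        Finite (CT A × FC m (s \ A)) ∧
        Nat.card (CT A × FC m (s \ A)) = ahat A.card * Qhat m (s.card - A.card) := by
      intro A hA
      rw [Finset.mem_powerset] at hA
      obtain ⟨c1, f1⟩ := CT_card A
      obtain ⟨c2, f2⟩ := ih (s \ A)
      haveI := f1; haveI := f2
      refine ⟨inferInstance, ?_⟩
      rw [Nat.card_prod, c1, c2, Finset.card_sdiff_of_subset hA]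
    haveI hfib : ∀ A : {A // A ∈ s.powerset}, Finite (CT A.1 × FC m (s \ A.1)) :=
      fun A => (key A.1 A.2).1
    have hequiv : (Σ A : {A // A ∈ s.powerset}, CT A.1 × FC m (s \ A.1)) ≃ FC (m + 1) s :=
      Equiv.ofBijective _ (buildForest_bijective m s)
    refine ⟨?_, Finite.of_equiv _ hequiv⟩
    rw [← Nat.card_congr hequiv, natCard_sigma,
      Finset.sum_coe_sort _ (fun A => Nat.card (CT A × FC m (s \ A))),
      Finset.sum_congr rfl (fun A hA => (key A hA).2),
      Finset.sum_powerset_apply_card (fun j => ahat j * Qhat m (s.card - j))]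
    show (∑ j ∈ Finset.range (s.card + 1), s.card.choose j • (ahat j * Qhat m (s.card - j)))
      = Qhat (m + 1) s.card
    simp only [smul_eq_mul]
    rfl

open Nat Finset

def cstep (g : ℕ → ℕ) (n : ℕ) : ℕ := ∑ k ∈ range n, catalan k * g (n - 1 - k)

/-- `cc m n`: sum over compositions of n into m positive parts of products of Catalans. -/
def cc : ℕ → ℕ → ℕ
  | 0 => fun n => if n = 0 then 1 else 0
  | m + 1 => cstep (cc m)

lemma cc_zero_of_lt : ∀ m n, n < m → cc m n = 0 := by
  intro m
  induction m with
  | zero => omega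
  | succ m ih =>
    intro n hn
    show cstep (cc m) n = 0
    rw [cstep]
    refine Finset.sum_eq_zero fun k hk => ?_
    rw [mem_range] at hk
    rw [ih (n - 1 - k) (by omega), mul_zero]

lemma Qhat_zero_of_lt : ∀ m n, n < m → Qhat m n = 0 := by
  intro m
  induction m with
  | zero => omega
  | succ m ih =>
    intro n hn
    show qstep (Qhat m) n = 0
    rw [qstep]
    refine Finset.sum_eq_zero fun j hj => ?_
    rw [mem_range] at hj
    rcases Nat.eq_zero_or_pos j with rfl | hj0
    · simp [ahat]
    · rw [ih (n - j) (by omega), mul_zero, mul_zero]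

lemma Qhat_diag : ∀ m, Qhat m m = m.factorial := by
  intro m
  induction m with
  | zero => rfl
  | succ m ih =>
    show qstep (Qhat m) (m + 1) = (m + 1).factorial
    rw [qstep]
    rw [Finset.sum_eq_single_of_mem 1 (by rw [mem_range]; omega)]
    · have e : m + 1 - 1 = m := by omega
      rw [e, ih, Nat.choose_one_right]
      show (m + 1) * (ahat 1 * m.factorial) = (m + 1).factorial
      simp [ahat, df, Nat.factorial_succ]
    · intro j hj hj1
      rcases Nat.eq_zero_or_pos j with rfl | hj0
      · simp [ahat]
      · rw [Qhat_zero_of_lt m (m + 1 - j) (by rw [mem_range] at hj; omega), mul_zero, mul_zero]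

lemma cc_one (d : ℕ) : cc 1 (d + 1) = catalan d := by
  show cstep (cc 0) (d + 1) = catalan d
  rw [cstep, Finset.sum_eq_single_of_mem d (by rw [mem_range]; omega)]
  · have : d + 1 - 1 - d = 0 := by omega
    rw [this]
    show catalan d * 1 = catalan d
    exact mul_one _
  · intro k hk hkd
    rw [mem_range] at hk
    have : cc 0 (d + 1 - 1 - k) = 0 := by
      show (if d + 1 - 1 - k = 0 then 1 else 0) = 0
      rw [if_neg (by omega)]
    rw [this, mul_zero]

lemma cc_two (d : ℕ) : cc 2 (d + 2) = catalan (d + 1) := by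
  show cstep (cc 1) (d + 2) = catalan (d + 1)
  rw [cstep, Finset.sum_range_succ]
  have h1 : cc 1 (d + 2 - 1 - (d + 1)) = 0 := by
    have : d + 2 - 1 - (d + 1) = 0 := by omega
    rw [this]
    show cstep (cc 0) 0 = 0
    simp [cstep]
  rw [h1, mul_zero, add_zero, catalan_succ_range]
  refine Finset.sum_congr rfl fun k hk => ?_
  rw [mem_range] at hk
  have : d + 2 - 1 - k = (d - k) + 1 := by omega
  rw [this, cc_one]

lemma cc_rec (m d : ℕ) : cc (m + 1) (d + 1) = cc m d + cc (m + 2) (d + 1) := by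
  show cstep (cc m) (d + 1) = cc m d + cstep (cc (m + 1)) (d + 1)
  rw [cstep, Finset.sum_range_succ']
  have h0 : catalan 0 * cc m (d + 1 - 1 - 0) = cc m d := by
    simp
  rw [h0, add_comm]
  congr 1
  -- ∑ k in range d, catalan (k+1) * cc m (d - 1 - k) = cstep (cc (m+1)) (d+1)
  have hL : ∀ k ∈ range d, catalan (k + 1) * cc m (d + 1 - 1 - (k + 1)) =
      ∑ i ∈ range (k + 1), catalan i * catalan (k - i) * cc m (d - 1 - k) := by
    intro k hk
    have : d + 1 - 1 - (k + 1) = d - 1 - k := by omega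
    rw [this, catalan_succ_range, Finset.sum_mul]
  rw [Finset.sum_congr rfl hL]
  have hR : cstep (cc (m + 1)) (d + 1) =
      ∑ i ∈ range (d + 1), ∑ l ∈ range (d - i), catalan i * (catalan l * cc m (d - i - 1 - l)) := by
    rw [cstep]
    refine Finset.sum_congr rfl fun i hi => ?_
    show catalan i * cstep (cc m) (d + 1 - 1 - i) = _
    have : d + 1 - 1 - i = d - i := by omega
    rw [this, cstep, Finset.mul_sum]
  rw [hR, Finset.sum_sigma' (range d) (fun k => range (k + 1))
      (fun k i => catalan i * catalan (k - i) * cc m (d - 1 - k)),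
    Finset.sum_sigma' (range (d + 1)) (fun i => range (d - i))
      (fun i l => catalan i * (catalan l * cc m (d - i - 1 - l)))]
  refine Finset.sum_nbij' (fun a => ⟨a.2, a.1 - a.2⟩) (fun b => ⟨b.1 + b.2, b.1⟩)
    ?_ ?_ ?_ ?_ ?_
  · rintro ⟨k, i⟩ ha
    simp only [Finset.mem_sigma, mem_range] at ha ⊢
    omega
  · rintro ⟨i, l⟩ hb
    simp only [Finset.mem_sigma, mem_range] at hb ⊢
    omega
  · rintro ⟨k, i⟩ ha
    simp only [Finset.mem_sigma, mem_range] at ha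
    show (⟨i + (k - i), i⟩ : Σ _ : ℕ, ℕ) = ⟨k, i⟩
    have : i + (k - i) = k := by omega
    rw [this]
  · rintro ⟨i, l⟩ hb
    simp only [Finset.mem_sigma, mem_range] at hb
    show (⟨i, i + l - i⟩ : Σ _ : ℕ, ℕ) = ⟨i, l⟩
    have : i + l - i = l := by omega
    rw [this]
  · rintro ⟨k, i⟩ ha
    simp only [Finset.mem_sigma, mem_range] at ha
    have : d - i - 1 - (k - i) = d - 1 - k := by omega
    show catalan i * catalan (k - i) * cc m (d - 1 - k)
      = catalan i * (catalan (k - i) * cc m (d - i - 1 - (k - i)))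
    rw [this, mul_assoc]

lemma Qhat_two_pow : ∀ m n, Qhat m n * 2 ^ (n - m) = n.factorial * cc m n := by
  intro m
  induction m with
  | zero =>
    intro n
    cases n with
    | zero => rfl
    | succ k =>
      show 0 * 2 ^ (k + 1) = (k + 1).factorial * (if k + 1 = 0 then 1 else 0)
      rw [if_neg (by omega)]
      simp
  | succ m ih =>
    intro n
    rcases lt_or_ge n (m + 1) with hn | hn
    · rw [Qhat_zero_of_lt _ _ hn, cc_zero_of_lt _ _ hn, zero_mul, mul_zero]
    · show qstep (Qhat m) n * 2 ^ (n - (m + 1)) = n.factorial * cstep (cc m) n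
      rw [qstep, Finset.sum_mul, Finset.sum_range_succ']
      have h0 : n.choose 0 * (ahat 0 * Qhat m (n - 0)) * 2 ^ (n - (m + 1)) = 0 := by
        simp [ahat]
      rw [h0, add_zero]
      have hterm : ∀ i ∈ range n,
          n.choose (i + 1) * (ahat (i + 1) * Qhat m (n - (i + 1))) * 2 ^ (n - (m + 1)) =
            n.factorial * (catalan i * cc m (n - 1 - i)) := by
        intro i hi
        rw [mem_range] at hi
        have he : n - (i + 1) = n - 1 - i := by omega
        rcases lt_or_ge (n - 1 - i) m with hc | hc
        · rw [he, Qhat_zero_of_lt _ _ hc, cc_zero_of_lt _ _ hc]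
          simp
        · have e2 : 2 ^ (n - (m + 1)) = 2 ^ i * 2 ^ (n - 1 - i - m) := by
            rw [← pow_add]
            congr 1
            omega
          have e3 : n - 1 - i - m = (n - (i + 1)) - m := by omega
          calc n.choose (i + 1) * (ahat (i + 1) * Qhat m (n - (i + 1))) * 2 ^ (n - (m + 1))
              = n.choose (i + 1) * ((ahat (i + 1) * 2 ^ i) *
                  (Qhat m (n - (i + 1)) * 2 ^ ((n - (i + 1)) - m))) := by
                rw [e2, e3]; ring
            _ = n.choose (i + 1) * (((i + 1).factorial * catalan i) *
                  ((n - (i + 1)).factorial * cc m (n - (i + 1)))) := by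
                rw [ahat_two_pow, ih]
            _ = (n.choose (i + 1) * (i + 1).factorial * (n - (i + 1)).factorial) *
                  (catalan i * cc m (n - (i + 1))) := by ring
            _ = n.factorial * (catalan i * cc m (n - 1 - i)) := by
                rw [Nat.choose_mul_factorial_mul_factorial (by omega : i + 1 ≤ n), he]
      rw [Finset.sum_congr rfl hterm, ← Finset.mul_sum, cstep]

lemma catalan_fact (d : ℕ) :
    catalan d * ((d + 1).factorial * d.factorial) = (2 * d).factorial := by
  have h1 : (d + 1) * catalan d = Nat.centralBinom d := succ_mul_catalan_eq_centralBinom d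
  have h2 : (2 * d).choose d * d.factorial * (2 * d - d).factorial = (2 * d).factorial :=
    Nat.choose_mul_factorial_mul_factorial (by omega)
  have h3 : 2 * d - d = d := by omega
  rw [h3] at h2
  calc catalan d * ((d + 1).factorial * d.factorial)
      = ((d + 1) * catalan d) * d.factorial * d.factorial := by
        rw [Nat.factorial_succ]; ring
    _ = (2 * d).choose d * d.factorial * d.factorial := by
        rw [h1, show Nat.centralBinom d = (2 * d).choose d from rfl]
    _ = (2 * d).factorial := h2

lemma cc_closed : ∀ e d : ℕ,
    cc (e + 1) (e + 1 + d) * ((e + 1 + d).factorial * d.factorial) =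
      (e + 1) * (2 * d + e).factorial := by
  intro e
  induction e using Nat.strong_induction_on with
  | _ e ih =>
    rcases e with _ | e
    · intro d
      have h1 : 0 + 1 + d = d + 1 := by omega
      have h3 : 2 * d + 0 = 2 * d := by omega
      rw [h1, cc_one d, h3]
      simpa using catalan_fact d
    rcases e with _ | e
    · intro d
      have h1 : 0 + 1 + 1 + d = d + 2 := by omega
      have h2 : (0:ℕ) + 1 + 1 = 2 := by norm_num
      have h3 : 2 * d + (0 + 1) = 2 * d + 1 := by omega
      rw [h1, h2, h3, cc_two d]
      refine Nat.eq_of_mul_eq_mul_left (show 0 < d + 1 by omega) ?_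
      calc (d + 1) * (catalan (d + 1) * ((d + 2).factorial * d.factorial))
          = catalan (d + 1) * ((d + 2).factorial * ((d + 1) * d.factorial)) := by ring
        _ = catalan (d + 1) * ((d + 2).factorial * (d + 1).factorial) := by
            rw [Nat.factorial_succ d]
        _ = (2 * (d + 1)).factorial := catalan_fact (d + 1)
        _ = (2 * d + 2) * (2 * d + 1).factorial := by
            rw [show 2 * (d + 1) = (2 * d + 1) + 1 by omega, Nat.factorial_succ]
        _ = (d + 1) * (2 * (2 * d + 1).factorial) := by ring
    · intro d
      have kg1 : e + 1 + 1 + 1 = e + 3 := by omega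
      have kg2 : e + 1 + 1 + 1 + d = e + 3 + d := by omega
      have kg3 : 2 * d + (e + 1 + 1) = 2 * d + e + 2 := by omega
      rw [kg1, kg2, kg3]
      -- goal : cc (e+3) (e+3+d) * ((e+3+d)! * d!) = (e+3) * (2d+e+2)!
      have hA := ih (e + 1) (by omega) (d + 1)
      have hB := ih e (by omega) (d + 1)
      have k2 : e + 1 + 1 + (d + 1) = e + 3 + d := by omega
      have k3 : e + 1 + (d + 1) = e + 2 + d := by omega
      have k5 : 2 * (d + 1) + (e + 1) = 2 * d + e + 3 := by omega
      have k6 : 2 * (d + 1) + e = 2 * d + e + 2 := by omega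
      have k7 : e + 1 + 1 = e + 2 := by omega
      rw [k2, k5, k7] at hA
      -- hA : cc (e+2) (e+3+d) * ((e+3+d)! * (d+1)!) = (e+2) * (2d+e+3)!
      rw [k3, k6] at hB
      -- hB : cc (e+1) (e+2+d) * ((e+2+d)! * (d+1)!) = (e+1) * (2d+e+2)!
      have hrec := cc_rec (e + 1) (e + 2 + d)
      have k8 : e + 2 + d + 1 = e + 3 + d := by omega
      have k9 : e + 1 + 2 = e + 3 := by omega
      rw [k8, k7, k9] at hrec
      -- hrec : cc (e+2) (e+3+d) = cc (e+1) (e+2+d) + cc (e+3) (e+3+d)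
      refine Nat.eq_of_mul_eq_mul_left (show 0 < d + 1 by omega) ?_
      set F := (2 * d + e + 2).factorial with hF
      set S := (e + 3 + d).factorial * (d + 1).factorial with hS
      have hfs : (e + 3 + d).factorial = (e + 3 + d) * (e + 2 + d).factorial := by
        rw [show e + 3 + d = (e + 2 + d) + 1 by omega, Nat.factorial_succ]
      have hfs2 : (2 * d + e + 3).factorial = (2 * d + e + 3) * F := by
        rw [show 2 * d + e + 3 = (2 * d + e + 2) + 1 by omega, Nat.factorial_succ]
      have hBX : cc (e + 1) (e + 2 + d) * S = (e + 3 + d) * ((e + 1) * F) := by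
        calc cc (e + 1) (e + 2 + d) * S
            = (e + 3 + d) * (cc (e + 1) (e + 2 + d) * ((e + 2 + d).factorial * (d + 1).factorial)) := by
              rw [hS, hfs]; ring
          _ = (e + 3 + d) * ((e + 1) * F) := by rw [hB]
      have keyF : (e + 2) * ((2 * d + e + 3) * F)
          = (e + 3 + d) * ((e + 1) * F) + (d + 1) * ((e + 3) * F) := by
        have key : (e + 2) * (2 * d + e + 3) = (e + 3 + d) * (e + 1) + (d + 1) * (e + 3) := by
          ring
        calc (e + 2) * ((2 * d + e + 3) * F) = ((e + 2) * (2 * d + e + 3)) * F := by ring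
          _ = ((e + 3 + d) * (e + 1) + (d + 1) * (e + 3)) * F := by rw [key]
          _ = (e + 3 + d) * ((e + 1) * F) + (d + 1) * ((e + 3) * F) := by ring
      have h5 : cc (e + 1) (e + 2 + d) * S + cc (e + 3) (e + 3 + d) * S
          = cc (e + 1) (e + 2 + d) * S + (d + 1) * ((e + 3) * F) := by
        calc cc (e + 1) (e + 2 + d) * S + cc (e + 3) (e + 3 + d) * S
            = cc (e + 2) (e + 3 + d) * S := by rw [← add_mul, ← hrec]
          _ = (e + 2) * ((2 * d + e + 3) * F) := by rw [hS, hA, hfs2]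
          _ = cc (e + 1) (e + 2 + d) * S + (d + 1) * ((e + 3) * F) := by
              rw [keyF, hBX]
      have h6 : cc (e + 3) (e + 3 + d) * S = (d + 1) * ((e + 3) * F) :=
        Nat.add_left_cancel h5
      calc (d + 1) * (cc (e + 3) (e + 3 + d) * ((e + 3 + d).factorial * d.factorial))
          = cc (e + 3) (e + 3 + d) * ((e + 3 + d).factorial * ((d + 1) * d.factorial)) := by
            ring
        _ = cc (e + 3) (e + 3 + d) * S := by rw [hS, Nat.factorial_succ d]
        _ = (d + 1) * ((e + 3) * F) := h6


/-- the number of ordered m-forests on n labeled leaves equals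
(2n-m-1)!·m/((n-m)!·2^(n-m)) for n > m ≥ 1, and m! for n = m. -/
theorem stmt1 (m : ℕ) (hm : 1 ≤ m) :
    Nat.card (PhyloForest m m) = Nat.factorial m ∧
    ∀ n : ℕ, m < n →
      Nat.card (PhyloForest m n) * (Nat.factorial (n - m) * 2 ^ (n - m)) =
        Nat.factorial (2 * n - m - 1) * m := by
  have hcard : ∀ n, Nat.card (PhyloForest m n) = Qhat m n := by
    intro n
    rw [Nat.card_congr (forestEquiv m n), (FC_card m (Finset.Icc 1 n)).1, Nat.card_Icc]
    norm_num
  constructor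
  · rw [hcard, Qhat_diag]
  · intro n hn
    obtain ⟨e, rfl⟩ : ∃ e, m = e + 1 := ⟨m - 1, by omega⟩
    obtain ⟨d, rfl⟩ : ∃ d, n = (e + 1) + d := ⟨n - (e + 1), by omega⟩
    have h1 : e + 1 + d - (e + 1) = d := by omega
    have h2 : 2 * (e + 1 + d) - (e + 1) - 1 = 2 * d + e := by omega
    rw [hcard, h1, h2]
    have hQ := Qhat_two_pow (e + 1) (e + 1 + d)
    rw [h1] at hQ
    calc Qhat (e + 1) (e + 1 + d) * (d.factorial * 2 ^ d)
        = (Qhat (e + 1) (e + 1 + d) * 2 ^ d) * d.factorial := by ring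
      _ = ((e + 1 + d).factorial * cc (e + 1) (e + 1 + d)) * d.factorial := by rw [hQ]
      _ = cc (e + 1) (e + 1 + d) * ((e + 1 + d).factorial * d.factorial) := by ring
      _ = (e + 1) * (2 * d + e).factorial := cc_closed e d
      _ = (2 * d + e).factorial * (e + 1) := by ring
end

section
/- For every integer n ≥ 2, the sum over k from 0 to n of ((n-1)_k · (2-n)_k)/((-n)_k · k!) · (1/2)^k equals 2^(n-1)/n, where (a)_k = a(a+1)···(a+k-1) is the rising factorial. (Equivalently, the hypergeometric value ₂F₁(n-1, 2-n; -n; 1/2) = 2^(n-1)/n.) -/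
private lemma rf_pos_eval (m : ℕ) : ∀ k : ℕ, rf ((m : ℝ) + 1) k * (Nat.factorial m : ℝ)
    = (Nat.factorial (m + k) : ℝ)
  | 0 => by simp [rf]
  | k + 1 => by
    have ih := rf_pos_eval m k
    have h : (m + (k + 1)) = (m + k) + 1 := by ring
    rw [h, rf, Nat.factorial_succ]
    push_cast
    nlinarith [ih]

private lemma rf_neg_eval (M : ℕ) : ∀ k d : ℕ, k + d = M →
    rf (-(M : ℝ)) k * (Nat.factorial d : ℝ) = (-1) ^ k * (Nat.factorial M : ℝ)
  | 0, d, h => by subst h; simp [rf]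
  | k + 1, d, h => by
    have ih := rf_neg_eval M k (d + 1) (by omega)
    have hM : (M : ℝ) = (k : ℝ) + d + 1 := by
      have : ((k + 1 + d : ℕ) : ℝ) = (M : ℝ) := by rw [h]
      push_cast at this; linarith
    rw [rf]
    rw [Nat.factorial_succ] at ih
    push_cast at ih ⊢
    rw [pow_succ]
    linear_combination (-1 : ℝ) * ih - rf (-(M : ℝ)) k * (Nat.factorial d : ℝ) * hM

private noncomputable def auxB (m k : ℕ) : ℝ :=
  (Nat.factorial (m + k) : ℝ) / ((Nat.factorial (m + 2) : ℝ) * (Nat.factorial k : ℝ))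
    * (1 / 2) ^ k

private noncomputable def auxT (m k : ℕ) : ℝ :=
  ((m : ℝ) + 2 - k) * ((m : ℝ) + 1 - k) * auxB m k

private noncomputable def auxG (m k : ℕ) : ℝ :=
  -2 * k * ((m : ℝ) + 2 - k) * ((m : ℝ) + 3 - k) * auxB m k

private lemma fact_ne (j : ℕ) : (Nat.factorial j : ℝ) ≠ 0 := by
  exact_mod_cast (Nat.factorial_pos j).ne'

private lemma auxWZ (m k : ℕ) :
    ((m : ℝ) + 3) * auxT (m + 1) k = 2 * ((m : ℝ) + 2) * auxT m k + auxG m (k + 1) - auxG m k := by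
  unfold auxT auxG auxB
  have h1 : (m + 1 + k) = (m + k) + 1 := by ring
  have h2 : (m + (k + 1)) = (m + k) + 1 := by ring
  have h3 : (m + 1 + 2) = (m + 2) + 1 := by ring
  rw [h1, h2, h3]
  simp only [Nat.factorial_succ]
  push_cast
  have e1 := fact_ne (m + k)
  have e2 := fact_ne (m + 2)
  have e3 := fact_ne k
  field_simp
  ring

private lemma auxSum : ∀ m : ℕ,
    ∑ k ∈ Finset.range (m + 1), auxT m k = 2 ^ (m + 1) / ((m : ℝ) + 2)
  | 0 => by
    norm_num [auxT, auxB, Nat.factorial]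
  | m + 1 => by
    have ih := auxSum m
    have key : ((m : ℝ) + 3) * ∑ k ∈ Finset.range (m + 2), auxT (m + 1) k
        = 2 * ((m : ℝ) + 2) * (∑ k ∈ Finset.range (m + 2), auxT m k)
          + (auxG m (m + 2) - auxG m 0) := by
      rw [Finset.mul_sum, Finset.mul_sum, ← Finset.sum_range_sub (fun k => auxG m k),
        ← Finset.sum_add_distrib]
      exact Finset.sum_congr rfl fun k _ => by rw [auxWZ]; ring
    have hT : auxT m (m + 1) = 0 := by
      unfold auxT; push_cast; ring_nf
    have hG2 : auxG m (m + 2) = 0 := by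
      unfold auxG; push_cast; ring_nf
    have hG0 : auxG m 0 = 0 := by unfold auxG; push_cast; ring
    have hsum : ∑ k ∈ Finset.range (m + 2), auxT m k = 2 ^ (m + 1) / ((m : ℝ) + 2) := by
      rw [Finset.sum_range_succ, hT, add_zero, ih]
    rw [hsum, hG2, hG0] at key
    have h3 : ((m : ℝ) + 3) ≠ 0 := by positivity
    have h2 : ((m : ℝ) + 2) ≠ 0 := by positivity
    show ∑ k ∈ Finset.range (m + 2), auxT (m + 1) k = _
    push_cast
    rw [eq_div_iff (by positivity)]
    have : ((m : ℝ) + 1) + 2 = (m : ℝ) + 3 := by ring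
    rw [this]
    field_simp at key
    have key2 : (((m : ℝ) + 3) * ∑ k ∈ Finset.range (m + 2), auxT (m + 1) k)
        = 2 * 2 ^ (m + 1) := by
      apply mul_right_cancel₀ h2
      linear_combination ((m : ℝ) + 2) * key
    rw [pow_succ]
    linear_combination key2

private lemma term_eq (m k : ℕ) (hk : k ≤ m) :
    rf (((m + 2 : ℕ) : ℝ) - 1) k * rf (2 - ((m + 2 : ℕ) : ℝ)) k /
      (rf (-((m + 2 : ℕ) : ℝ)) k * (Nat.factorial k : ℝ)) * (1 / 2) ^ k = auxT m k := by
  obtain ⟨d, rfl⟩ : ∃ d, m = k + d := ⟨m - k, by omega⟩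
  have hA := rf_pos_eval (k + d) k
  have hB := rf_neg_eval (k + d) k d rfl
  have hC := rf_neg_eval (k + d + 2) k (d + 2) (by omega)
  have h1 : ((k + d + 2 : ℕ) : ℝ) - 1 = ((k + d : ℕ) : ℝ) + 1 := by push_cast; ring
  have h2 : (2 : ℝ) - ((k + d + 2 : ℕ) : ℝ) = -((k + d : ℕ) : ℝ) := by push_cast; ring
  rw [h1, h2]
  have eA : rf (((k + d : ℕ) : ℝ) + 1) k
      = (Nat.factorial (k + d + k) : ℝ) / (Nat.factorial (k + d) : ℝ) := by
    rw [eq_div_iff (fact_ne _)]; exact hA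
  have eB : rf (-((k + d : ℕ) : ℝ)) k
      = (-1) ^ k * (Nat.factorial (k + d) : ℝ) / (Nat.factorial d : ℝ) := by
    rw [eq_div_iff (fact_ne _)]; exact hB
  have eC : rf (-((k + d + 2 : ℕ) : ℝ)) k
      = (-1) ^ k * (Nat.factorial (k + d + 2) : ℝ) / (Nat.factorial (d + 2) : ℝ) := by
    rw [eq_div_iff (fact_ne _)]; exact hC
  rw [eA, eB, eC]
  unfold auxT auxB
  have hd2 : (Nat.factorial (d + 2) : ℝ) = ((d : ℝ) + 2) * ((d : ℝ) + 1) * (Nat.factorial d : ℝ) := by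
    simp [Nat.factorial_succ]; push_cast; ring
  rw [hd2]
  have hm1 : ((k + d : ℕ) : ℝ) + 2 - (k : ℝ) = (d : ℝ) + 2 := by push_cast; ring
  have hm2 : ((k + d : ℕ) : ℝ) + 1 - (k : ℝ) = (d : ℝ) + 1 := by push_cast; ring
  push_cast [hm1, hm2]
  have n1 : ((-1 : ℝ)) ^ k ≠ 0 := by
    simp [pow_ne_zero]
  have := fact_ne (k + d); have := fact_ne d; have := fact_ne (k + d + k)
  have := fact_ne (k + d + 2); have := fact_ne k
  have hd1 : ((d : ℝ) + 1) ≠ 0 := by positivity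
  have hd2' : ((d : ℝ) + 2) ≠ 0 := by positivity
  field_simp
  ring


/-- the terminating hypergeometric evaluation
₂F₁(n-1, 2-n; -n; 1/2) = 2^(n-1)/n. -/
theorem stmt2 (n : ℕ) (hn : 2 ≤ n) :
    ∑ k ∈ Finset.range (n - 1),
        rf ((n : ℝ) - 1) k * rf (2 - (n : ℝ)) k /
          (rf (-(n : ℝ)) k * (Nat.factorial k : ℝ)) * (1 / 2) ^ k
      = 2 ^ (n - 1) / (n : ℝ) := by
  obtain ⟨m, rfl⟩ : ∃ m, n = m + 2 := ⟨n - 2, by omega⟩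
  have hr : m + 2 - 1 = m + 1 := by omega
  rw [hr]
  rw [Finset.sum_congr rfl fun k hk => term_eq m k (by have := Finset.mem_range.mp hk; omega)]
  rw [auxSum m]
  push_cast
  ring
end

section
/- For all real numbers a, b with a ≠ 1, b ≠ 1, 2a not a nonpositive integer, and b+1/2 not a nonpositive integer (so that all terms are defined and both series converge), the identity ₄F₃(1, a, a+1/2, b; 2, 2a, b+1/2; 1) = ((2b-1)/((a-1)(b-1))) · (-1 + ₃F₂(a-1, a-1/2, b-1; 2a-1, b-1/2; 1)) holds, where ₚF_q denotes the generalized hypergeometric series with argument 1. -/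
lemma rf_shift (x : ℝ) (k : ℕ) : rf x (k + 1) = x * rf (x + 1) k := by
  induction k with
  | zero => simp [rf]
  | succ n ih =>
    show rf x (n + 1) * (x + (n + 1 : ℕ)) = x * (rf (x + 1) n * (x + 1 + n))
    rw [ih]; push_cast; ring

lemma rf_one (k : ℕ) : rf 1 k = (Nat.factorial k : ℝ) := by
  induction k with
  | zero => simp [rf]
  | succ n ih =>
    show rf 1 n * (1 + (n : ℝ)) = _
    rw [ih, Nat.factorial_succ]; push_cast; ring

lemma rf_two (k : ℕ) : rf 2 k = (Nat.factorial (k + 1) : ℝ) := by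
  induction k with
  | zero => simp [rf]
  | succ n ih =>
    show rf 2 n * (2 + (n : ℝ)) = _
    rw [ih, show (n + 1 + 1).factorial = (n + 2) * (n + 1).factorial from rfl]
    push_cast; ring

/-- the contiguous relation
₄F₃(1, a, a+1/2, b; 2, 2a, b+1/2; 1)
 = ((2b-1)/((a-1)(b-1)))·(-1 + ₃F₂(a-1, a-1/2, b-1; 2a-1, b-1/2; 1)),
for real a, b such that no denominator Pochhammer symbol vanishes and both
series converge. -/
theorem stmt4 (a b : ℝ) (ha : a ≠ 1) (hb : b ≠ 1)
    (h2a : ∀ k : ℕ, rf (2 * a) k ≠ 0) (hb2 : ∀ k : ℕ, rf (b + 1 / 2) k ≠ 0)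
    (h2a' : ∀ k : ℕ, rf (2 * a - 1) k ≠ 0)
    (hb2' : ∀ k : ℕ, rf (b - 1 / 2) k ≠ 0)
    (hs1 : Summable fun k : ℕ =>
      rf 1 k * rf a k * rf (a + 1 / 2) k * rf b k /
        (rf 2 k * rf (2 * a) k * rf (b + 1 / 2) k * (Nat.factorial k : ℝ)))
    (hs2 : Summable fun k : ℕ =>
      rf (a - 1) k * rf (a - 1 / 2) k * rf (b - 1) k /
        (rf (2 * a - 1) k * rf (b - 1 / 2) k * (Nat.factorial k : ℝ))) :
    (∑' k : ℕ,
        rf 1 k * rf a k * rf (a + 1 / 2) k * rf b k /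
          (rf 2 k * rf (2 * a) k * rf (b + 1 / 2) k * (Nat.factorial k : ℝ)))
      = (2 * b - 1) / ((a - 1) * (b - 1)) *
          (-1 + ∑' k : ℕ,
            rf (a - 1) k * rf (a - 1 / 2) k * rf (b - 1) k /
              (rf (2 * a - 1) k * rf (b - 1 / 2) k *
                (Nat.factorial k : ℝ))) := by
  have ha1 : a - 1 ≠ 0 := sub_ne_zero.2 ha
  have hb1 : b - 1 ≠ 0 := sub_ne_zero.2 hb
  have h2a1 : 2 * a - 1 ≠ 0 := by
    have := h2a' 1
    simpa [rf] using this
  have hbh : b - 1 / 2 ≠ 0 := by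
    have := hb2' 1
    simpa [rf] using this
  set f : ℕ → ℝ := fun k =>
    rf (a - 1) k * rf (a - 1 / 2) k * rf (b - 1) k /
      (rf (2 * a - 1) k * rf (b - 1 / 2) k * (Nat.factorial k : ℝ)) with hf
  have key : ∀ k : ℕ,
      rf 1 k * rf a k * rf (a + 1 / 2) k * rf b k /
        (rf 2 k * rf (2 * a) k * rf (b + 1 / 2) k * (Nat.factorial k : ℝ))
      = (2 * b - 1) / ((a - 1) * (b - 1)) * f (k + 1) := by
    intro k
    have e1 : a - 1 + 1 = a := by ring
    have e2 : a - 1 / 2 + 1 = a + 1 / 2 := by ring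
    have e3 : b - 1 + 1 = b := by ring
    have e4 : 2 * a - 1 + 1 = 2 * a := by ring
    have e5 : b - 1 / 2 + 1 = b + 1 / 2 := by ring
    have hfac : (Nat.factorial k : ℝ) ≠ 0 := Nat.cast_ne_zero.2 k.factorial_ne_zero
    have hfac1 : (Nat.factorial (k + 1) : ℝ) ≠ 0 := Nat.cast_ne_zero.2 (k + 1).factorial_ne_zero
    have hah : a - 1 / 2 ≠ 0 := by
      intro h; apply h2a1; linarith
    simp only [hf, rf_shift, e1, e2, e3, e4, e5, rf_one, rf_two]
    rw [div_mul_div_comm, div_eq_div_iff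
      (by exact mul_ne_zero (mul_ne_zero (mul_ne_zero hfac1 (h2a k)) (hb2 k)) hfac)
      (by exact mul_ne_zero (mul_ne_zero ha1 hb1) (mul_ne_zero (mul_ne_zero
        (mul_ne_zero h2a1 (h2a k)) (mul_ne_zero hbh (hb2 k))) hfac1))]
    ring
  have hs2' : Summable fun k : ℕ => f (k + 1) := (summable_nat_add_iff 1).2 hs2
  have hsplit : (∑' k : ℕ, f k) = f 0 + ∑' k : ℕ, f (k + 1) := hs2.tsum_eq_zero_add
  have hf0 : f 0 = 1 := by simp [hf, rf]
  calc (∑' k : ℕ,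
        rf 1 k * rf a k * rf (a + 1 / 2) k * rf b k /
          (rf 2 k * rf (2 * a) k * rf (b + 1 / 2) k * (Nat.factorial k : ℝ)))
      = ∑' k : ℕ, (2 * b - 1) / ((a - 1) * (b - 1)) * f (k + 1) := tsum_congr key
    _ = (2 * b - 1) / ((a - 1) * (b - 1)) * ∑' k : ℕ, f (k + 1) := tsum_mul_left
    _ = (2 * b - 1) / ((a - 1) * (b - 1)) * (-1 + ∑' k : ℕ, f k) := by
        rw [hsplit, hf0]; ring
end

section
/- For every integer n ≥ 2, Σ_{i=2}^{n} i · (i-1) · (2n-i-2)! / (2(n-i))!! = 2^(n-1) · (n-1)!. -/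
private noncomputable def Tf (m j : ℕ) : ℝ :=
  ((m : ℝ) + 2 - j) * ((m : ℝ) + 1 - j) * (Nat.factorial (m + j) : ℝ) /
    (2 ^ j * (Nat.factorial j : ℝ))

private noncomputable def Gf (m j : ℕ) : ℝ :=
  -2 * j * ((m : ℝ) + 2 - j) * ((m : ℝ) + 3 - j) * (Nat.factorial (m + j) : ℝ) /
    (2 ^ j * (Nat.factorial j : ℝ))

private lemma df_two_mul (m : ℕ) : df (2 * m) = 2 ^ m * Nat.factorial m := by
  induction m with
  | zero => rfl
  | succ k ih =>
      have h : 2 * (k + 1) = (2 * k) + 2 := by ring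
      rw [h, df, ih, Nat.factorial_succ]
      ring

private lemma key (m j : ℕ) :
    Tf (m + 1) j - (2 * (m : ℝ) + 4) * Tf m j = Gf m (j + 1) - Gf m j := by
  have h1 : m + 1 + j = (m + j) + 1 := by omega
  have h2 : m + (j + 1) = (m + j) + 1 := by omega
  have hfj : (Nat.factorial j : ℝ) ≠ 0 := Nat.cast_ne_zero.mpr (Nat.factorial_ne_zero j)
  have hp : (2 : ℝ) ^ j ≠ 0 := by positivity
  have hj1 : ((j : ℝ) + 1) ≠ 0 := by positivity
  simp only [Tf, Gf, h1, h2, Nat.factorial_succ]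
  push_cast
  field_simp
  ring

private lemma Tf_top (m : ℕ) : Tf m (m + 1) = 0 := by
  simp only [Tf]
  push_cast
  rw [show (m : ℝ) + 1 - ((m : ℝ) + 1) = 0 by ring]
  ring

private lemma Gf_zero (m : ℕ) : Gf m 0 = 0 := by simp [Gf]

private lemma Gf_top (m : ℕ) : Gf m (m + 2) = 0 := by
  simp only [Gf]
  push_cast
  rw [show (m : ℝ) + 2 - ((m : ℝ) + 2) = 0 by ring]
  ring

private lemma Sf (m : ℕ) :
    ∑ j ∈ Finset.range (m + 1), Tf m j
      = 2 ^ (m + 1) * (Nat.factorial (m + 1) : ℝ) := by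
  induction m with
  | zero =>
      norm_num [Tf, Nat.factorial]
  | succ k ih =>
      have hstep : ∀ j, Tf (k + 1) j
          = (2 * (k : ℝ) + 4) * Tf k j + (Gf k (j + 1) - Gf k j) := by
        intro j
        have := key k j
        linarith
      calc ∑ j ∈ Finset.range (k + 2), Tf (k + 1) j
          = ∑ j ∈ Finset.range (k + 2),
              ((2 * (k : ℝ) + 4) * Tf k j + (Gf k (j + 1) - Gf k j)) :=
            Finset.sum_congr rfl fun j _ => hstep j
        _ = (2 * (k : ℝ) + 4) * ∑ j ∈ Finset.range (k + 2), Tf k j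
              + (Gf k (k + 2) - Gf k 0) := by
            rw [Finset.sum_add_distrib, Finset.sum_range_sub (Gf k) (k + 2),
              ← Finset.mul_sum]
        _ = 2 ^ (k + 2) * (Nat.factorial (k + 2) : ℝ) := by
            rw [Finset.sum_range_succ, Tf_top, add_zero, ih, Gf_top, Gf_zero]
            simp only [Nat.factorial_succ]
            push_cast
            ring

/-- Σ_{i=2}^{n} i(i-1)(2n-i-2)!/(2(n-i))‼ = 2^(n-1)(n-1)!. -/
theorem stmt7 (n : ℕ) (hn : 2 ≤ n) :
    ∑ i ∈ Finset.Icc 2 n,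
        (i : ℝ) * ((i : ℝ) - 1) * (Nat.factorial (2 * n - i - 2) : ℝ) /
          (df (2 * (n - i)) : ℝ)
      = 2 ^ (n - 1) * (Nat.factorial (n - 1) : ℝ) := by
  obtain ⟨m, rfl⟩ : ∃ m, n = m + 2 := ⟨n - 2, by omega⟩
  have hre : (∑ i ∈ Finset.Icc 2 (m + 2),
      (i : ℝ) * ((i : ℝ) - 1) * (Nat.factorial (2 * (m + 2) - i - 2) : ℝ) /
        (df (2 * ((m + 2) - i)) : ℝ)) = ∑ j ∈ Finset.range (m + 1), Tf m j := by
    rw [show Finset.Icc 2 (m + 2) = Finset.Ico 2 (m + 3) by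
        rw [← Finset.Ico_add_one_right_eq_Icc]; rfl]
    rw [Finset.sum_Ico_eq_sum_range]
    have hr : m + 3 - 2 = m + 1 := by omega
    rw [hr, ← Finset.sum_range_reflect]
    refine Finset.sum_congr rfl fun j hj => ?_
    have hjm : j ≤ m := by
      have := Finset.mem_range.mp hj
      omega
    have hrj : m + 1 - 1 - j = m - j := by omega
    rw [hrj]
    have e1 : 2 * (m + 2) - (2 + (m - j)) - 2 = m + j := by omega
    have e2 : (m + 2) - (2 + (m - j)) = j := by omega
    have e3 : ((2 + (m - j) : ℕ) : ℝ) = (m : ℝ) + 2 - j := by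
      rw [Nat.cast_add, Nat.cast_sub hjm]
      push_cast
      ring
    rw [e1, e2, e3, df_two_mul]
    simp only [Tf]
    push_cast
    ring
  rw [hre, Sf m]
  norm_num
end

section
/- For every n ≥ 2 and 2 ≤ i ≤ n, the identity Σ_{k=i-2}^{n-2} C(n-2,k) · F(i-2,k) · (i-1) · (2n-2k-5)!! = (i-1)·(2n-i-2)!/(2(n-i))!! holds, where F(m,m) = m! and F(m,k) = (2k-m-1)!·m/((k-m)!·2^(k-m)) for k > m (and F(0,0)=1, with the convention that the term for k with F undefined is the k=i-2 boundary term (i-2)! when i ≥ 2). -/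
/-- Number of ordered m-forests on k labeled leaves (as a rational number). -/
noncomputable def forestCount (m k : ℕ) : ℚ :=
  if k = m then Nat.factorial m
  else (Nat.factorial (2 * k - m - 1) : ℚ) * m /
    ((Nat.factorial (k - m) : ℚ) * 2 ^ (k - m))

/-- Number of binary rooted phylogenetic trees with m labeled leaves,
i.e. the interpretation of (2m-3)‼ with value 1 for m ≤ 1. -/
def treeCount (m : ℕ) : ℕ := if m ≤ 1 then 1 else df (2 * m - 3)

noncomputable def bb (m j : ℕ) : ℚ :=
  if j = 0 then 1 else m * (Nat.choose (m + 2 * j) j : ℚ) / (m + 2 * j)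

lemma bb_zero (m : ℕ) : bb m 0 = 1 := by simp [bb]

lemma bb_eq (m j : ℕ) (h : m + 2 * j ≠ 0) :
    bb m j = m * (Nat.choose (m + 2 * j) j : ℚ) / (m + 2 * j) := by
  rcases j with _ | j
  · have hm : (m : ℚ) ≠ 0 := Nat.cast_ne_zero.mpr (by omega)
    simp [bb]
    field_simp
  · simp [bb]

lemma bb_rec (m j : ℕ) : bb (m + 1) (j + 1) = bb m (j + 1) + bb (m + 2) j := by
  have h1 : bb (m + 1) (j + 1)
      = (m + 1) * (Nat.choose (m + 2 * j + 3) (j + 1) : ℚ) / (m + 2 * j + 3) := by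
    rw [bb_eq _ _ (by omega)]; norm_num; ring_nf
  have h2 : bb m (j + 1)
      = m * (Nat.choose (m + 2 * j + 2) (j + 1) : ℚ) / (m + 2 * j + 2) := by
    rw [bb_eq _ _ (by omega)]; norm_num; ring_nf
  have h3 : bb (m + 2) j
      = (m + 2) * (Nat.choose (m + 2 * j + 2) j : ℚ) / (m + 2 * j + 2) := by
    rw [bb_eq _ _ (by omega)]; norm_num; ring_nf
  rw [h1, h2, h3]
  have hp : Nat.choose (m + 2 * j + 3) (j + 1)
      = Nat.choose (m + 2 * j + 2) j + Nat.choose (m + 2 * j + 2) (j + 1) :=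
    Nat.choose_succ_succ (m + 2 * j + 2) j
  have hs : Nat.choose (m + 2 * j + 2) (j + 1) * (j + 1)
      = Nat.choose (m + 2 * j + 2) j * (m + j + 2) := by
    have := Nat.choose_succ_right_eq (m + 2 * j + 2) j
    rwa [show m + 2 * j + 2 - j = m + j + 2 by omega] at this
  have hsq : (Nat.choose (m + 2 * j + 2) (j + 1) : ℚ) * (j + 1)
      = (Nat.choose (m + 2 * j + 2) j : ℚ) * (m + j + 2) := by exact_mod_cast hs
  rw [hp]
  push_cast
  have d1 : (m : ℚ) + 2 * j + 3 ≠ 0 := by positivity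
  have d2 : (m : ℚ) + 2 * j + 2 ≠ 0 := by positivity
  field_simp
  ring_nf
  ring_nf at hsq
  nlinarith [hsq]

lemma bb_zero_left (j : ℕ) (hj : j ≠ 0) : bb 0 j = 0 := by
  simp [bb, hj]

lemma key_s16 : ∀ M m : ℕ, ∑ j ∈ Finset.range (M + 1),
    bb m j * (Nat.choose (2 * (M - j)) (M - j) : ℚ) = Nat.choose (2 * M + m) M := by
  intro M
  induction M with
  | zero => intro m; simp [bb_zero]
  | succ M ih =>
    intro m
    induction m with
    | zero =>
      rw [Finset.sum_range_succ' _ (M + 1)]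
      have : ∀ j ∈ Finset.range (M + 1), bb 0 (j + 1) * (Nat.choose (2 * (M + 1 - (j + 1))) (M + 1 - (j + 1)) : ℚ) = 0 := by
        intro j _; rw [bb_zero_left (j + 1) (by omega)]; ring
      rw [Finset.sum_congr rfl this]
      simp [bb_zero]
    | succ m ihm =>
      rw [Finset.sum_range_succ' _ (M + 1)] at ihm ⊢
      have step : ∀ j ∈ Finset.range (M + 1),
          bb (m + 1) (j + 1) * (Nat.choose (2 * (M + 1 - (j + 1))) (M + 1 - (j + 1)) : ℚ)
          = bb m (j + 1) * (Nat.choose (2 * (M + 1 - (j + 1))) (M + 1 - (j + 1)) : ℚ)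
            + bb (m + 2) j * (Nat.choose (2 * (M - j)) (M - j) : ℚ) := by
        intro j hj
        rw [bb_rec, add_mul, Nat.succ_sub_succ]
      rw [Finset.sum_congr rfl step, Finset.sum_add_distrib, bb_zero]
      rw [bb_zero] at ihm
      rw [ih (m + 2)]
      have e1 : (Nat.choose (2 * (M + 1) + m) M : ℚ) = (Nat.choose (2 * M + (m + 2)) M : ℚ) := by
        norm_num [show 2 * (M + 1) + m = 2 * M + (m + 2) from by omega]
      have e2 : (Nat.choose (2 * (M + 1) + (m + 1)) (M + 1) : ℚ)
          = (Nat.choose (2 * (M + 1) + m) (M + 1) : ℚ) + (Nat.choose (2 * (M + 1) + m) M : ℚ) := by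
        have : Nat.choose (2 * (M + 1) + m + 1) (M + 1)
            = Nat.choose (2 * (M + 1) + m) M + Nat.choose (2 * (M + 1) + m) (M + 1) :=
          Nat.choose_succ_succ _ _
        rw [show 2 * (M + 1) + (m + 1) = 2 * (M + 1) + m + 1 by omega, this]
        push_cast; ring
      linarith [ihm, e2, e1]

lemma df_even : ∀ M : ℕ, (df (2 * M) : ℚ) = 2 ^ M * Nat.factorial M := by
  intro M
  induction M with
  | zero => simp [df]
  | succ M ih =>
    have : 2 * (M + 1) = 2 * M + 2 := by omega
    rw [this, df, Nat.factorial_succ]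
    push_cast [ih]
    ring

lemma tree_succ (r : ℕ) : treeCount (r + 2) = (2 * r + 1) * treeCount (r + 1) := by
  rcases r with _ | s
  · simp [treeCount, df]
  · have h1 : 2 * (s + 1 + 2) - 3 = 2 * s + 1 + 2 := by omega
    have h2 : 2 * (s + 1 + 1) - 3 = 2 * s + 1 := by omega
    unfold treeCount
    rw [if_neg (by omega), if_neg (by omega), h1, h2, df]
    ring

lemma tree_eq : ∀ r : ℕ, (Nat.factorial (2 * r) : ℚ) = 2 ^ r * Nat.factorial r * treeCount (r + 1) := by
  intro r
  induction r with
  | zero => simp [treeCount]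
  | succ r ih =>
    have h : 2 * (r + 1) = 2 * r + 1 + 1 := by omega
    rw [h, Nat.factorial_succ, Nat.factorial_succ, tree_succ, Nat.factorial_succ]
    push_cast [ih]
    ring

lemma forest_eq (m j : ℕ) :
    forestCount m (m + j) = bb m j * (Nat.factorial (m + j) : ℚ) / 2 ^ j := by
  rcases j with _ | j
  · simp [forestCount, bb_zero]
  · have hk : m + (j + 1) ≠ m := by omega
    have h1 : 2 * (m + (j + 1)) - m - 1 = m + 2 * j + 1 := by omega
    have h2 : m + (j + 1) - m = j + 1 := by omega
    rw [forestCount, if_neg hk, h1, h2, bb_eq m (j + 1) (by omega)]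
    have hc : Nat.choose (m + 2 * (j + 1)) (j + 1) * Nat.factorial (j + 1)
        * Nat.factorial (m + (j + 1)) = Nat.factorial (m + 2 * (j + 1)) := by
      have := Nat.choose_mul_factorial_mul_factorial
        (show j + 1 ≤ m + 2 * (j + 1) from by omega)
      rwa [show m + 2 * (j + 1) - (j + 1) = m + (j + 1) from by omega] at this
    have hcq : (Nat.choose (m + 2 * (j + 1)) (j + 1) : ℚ) * Nat.factorial (j + 1)
        * Nat.factorial (m + (j + 1)) = Nat.factorial (m + 2 * (j + 1)) := by
      exact_mod_cast hc
    have hfs : (Nat.factorial (m + 2 * (j + 1)) : ℚ)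
        = (m + 2 * (j + 1)) * Nat.factorial (m + 2 * j + 1) := by
      rw [show m + 2 * (j + 1) = (m + 2 * j + 1) + 1 from by omega, Nat.factorial_succ]
      push_cast; ring
    have d1 : (Nat.factorial (j + 1) : ℚ) ≠ 0 := Nat.cast_ne_zero.mpr (Nat.factorial_ne_zero _)
    have d2 : ((2 : ℚ)) ^ (j + 1) ≠ 0 := by positivity
    have d3 : (m : ℚ) + 2 * (j + 1) ≠ 0 := by
      have : (0:ℚ) < (m:ℚ) + 2 * (j+1) := by positivity
      linarith
    field_simp
    push_cast at hcq hfs ⊢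
    linear_combination (-(m:ℚ)) * hfs + (-(m:ℚ)) * hcq

lemma term_eq_s16 (m j r : ℕ) :
    (Nat.choose (m + (j + r)) (m + j) : ℚ) * forestCount m (m + j) * treeCount (r + 1)
      = (Nat.factorial (m + (j + r)) : ℚ) / 2 ^ (j + r)
        * (bb m j * (Nat.choose (2 * r) r : ℚ)) := by
  have hA : Nat.choose (m + (j + r)) (m + j) * Nat.factorial (m + j) * Nat.factorial r
      = Nat.factorial (m + (j + r)) := by
    have := Nat.choose_mul_factorial_mul_factorial
      (show m + j ≤ m + (j + r) from by omega)
    rwa [show m + (j + r) - (m + j) = r from by omega] at this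
  have hB : Nat.choose (2 * r) r * Nat.factorial r * Nat.factorial r
      = Nat.factorial (2 * r) := by
    have := Nat.choose_mul_factorial_mul_factorial (show r ≤ 2 * r from by omega)
    rwa [show 2 * r - r = r from by omega] at this
  have hAq : (Nat.choose (m + (j + r)) (m + j) : ℚ) * Nat.factorial (m + j)
      * Nat.factorial r = Nat.factorial (m + (j + r)) := by exact_mod_cast hA
  have hBq : (Nat.choose (2 * r) r : ℚ) * Nat.factorial r * Nat.factorial r
      = Nat.factorial (2 * r) := by exact_mod_cast hB
  have hT : (treeCount (r + 1) : ℚ)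
      = (Nat.factorial (2 * r) : ℚ) / (2 ^ r * Nat.factorial r) := by
    rw [tree_eq r]
    have : ((2:ℚ)) ^ r * Nat.factorial r ≠ 0 := by
      have := Nat.factorial_ne_zero r
      positivity
    field_simp
  rw [forest_eq, hT]
  have d1 : ((2:ℚ)) ^ j ≠ 0 := by positivity
  have d2 : ((2:ℚ)) ^ r ≠ 0 := by positivity
  have d3 : (Nat.factorial r : ℚ) ≠ 0 := Nat.cast_ne_zero.mpr (Nat.factorial_ne_zero _)
  rw [pow_add]
  field_simp
  linear_combination
    (-bb m j * (Nat.choose (m + (j + r)) (m + j) : ℚ)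
        * (Nat.factorial (m + j) : ℚ)) * hBq
    + (bb m j * (Nat.choose (2 * r) r : ℚ)
        * (Nat.factorial r : ℚ)) * hAq

lemma main_sum (m M : ℕ) :
    ∑ j ∈ Finset.range (M + 1),
        (Nat.choose (m + M) (m + j) : ℚ) * forestCount m (m + j) * treeCount (M - j + 1)
      = (Nat.factorial (m + 2 * M) : ℚ) / (2 ^ M * Nat.factorial M) := by
  have step : ∀ j ∈ Finset.range (M + 1),
      (Nat.choose (m + M) (m + j) : ℚ) * forestCount m (m + j) * treeCount (M - j + 1)
        = (Nat.factorial (m + M) : ℚ) / 2 ^ M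
          * (bb m j * (Nat.choose (2 * (M - j)) (M - j) : ℚ)) := by
    intro j hj
    have hjM : j ≤ M := by simpa [Nat.lt_succ_iff] using hj
    have h1 : M = j + (M - j) := by omega
    calc (Nat.choose (m + M) (m + j) : ℚ) * forestCount m (m + j) * treeCount (M - j + 1)
        = (Nat.choose (m + (j + (M - j))) (m + j) : ℚ) * forestCount m (m + j)
            * treeCount ((M - j) + 1) := by rw [← h1]
      _ = (Nat.factorial (m + (j + (M - j))) : ℚ) / 2 ^ (j + (M - j))
            * (bb m j * (Nat.choose (2 * (M - j)) (M - j) : ℚ)) := term_eq_s16 m j (M - j)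
      _ = (Nat.factorial (m + M) : ℚ) / 2 ^ M
            * (bb m j * (Nat.choose (2 * (M - j)) (M - j) : ℚ)) := by rw [← h1]
  rw [Finset.sum_congr rfl step, ← Finset.mul_sum, key_s16 M m]
  have hC : Nat.choose (2 * M + m) M * Nat.factorial M * Nat.factorial (M + m)
      = Nat.factorial (2 * M + m) := by
    have := Nat.choose_mul_factorial_mul_factorial (show M ≤ 2 * M + m from by omega)
    rwa [show 2 * M + m - M = M + m from by omega] at this
  have hCq : (Nat.choose (2 * M + m) M : ℚ) * Nat.factorial M * Nat.factorial (M + m)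
      = Nat.factorial (2 * M + m) := by exact_mod_cast hC
  have e1 : (Nat.factorial (m + 2 * M) : ℚ) = Nat.factorial (2 * M + m) := by
    rw [show m + 2 * M = 2 * M + m from by omega]
  have e2 : (Nat.factorial (m + M) : ℚ) = Nat.factorial (M + m) := by
    rw [show m + M = M + m from by omega]
  have d1 : ((2:ℚ)) ^ M ≠ 0 := by positivity
  have d2 : (Nat.factorial M : ℚ) ≠ 0 := Nat.cast_ne_zero.mpr (Nat.factorial_ne_zero _)
  rw [e1, e2]
  field_simp
  linear_combination hCq

/-- the decomposition identity
Σ_{k=i-2}^{n-2} C(n-2,k)·F(i-2,k)·(i-1)·(2n-2k-5)‼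
  = (i-1)·(2n-i-2)!/(2(n-i))‼. -/
theorem stmt16 (n i : ℕ) (hn : 2 ≤ n) (hi2 : 2 ≤ i) (hin : i ≤ n) :
    ∑ k ∈ Finset.Icc (i - 2) (n - 2),
        (Nat.choose (n - 2) k : ℚ) * forestCount (i - 2) k *
          ((i : ℚ) - 1) * (treeCount (n - k - 1) : ℚ)
      = ((i : ℚ) - 1) * (Nat.factorial (2 * n - i - 2) : ℚ) /
          (df (2 * (n - i)) : ℚ) := by
  obtain ⟨m, rfl⟩ : ∃ m, i = m + 2 := ⟨i - 2, by omega⟩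
  obtain ⟨M, rfl⟩ : ∃ M, n = m + 2 + M := ⟨n - (m + 2), by omega⟩
  have e1 : m + 2 + M - 2 = m + M := by omega
  have e2 : m + 2 - 2 = m := by omega
  have e3 : m + 2 + M - (m + 2) = M := by omega
  have e4 : 2 * (m + 2 + M) - (m + 2) - 2 = m + 2 * M := by omega
  rw [e1, e2, e3, e4, ← Finset.Ico_add_one_right_eq_Icc, Finset.sum_Ico_eq_sum_range]
  have e5 : m + M + 1 - m = M + 1 := by omega
  rw [e5]
  have hterm : ∀ j ∈ Finset.range (M + 1),
      (Nat.choose (m + M) (m + j) : ℚ) * forestCount m (m + j) * (((m + 2 : ℕ) : ℚ) - 1)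
        * (treeCount (m + 2 + M - (m + j) - 1) : ℚ)
      = ((m : ℚ) + 1) * ((Nat.choose (m + M) (m + j) : ℚ) * forestCount m (m + j)
        * (treeCount (M - j + 1) : ℚ)) := by
    intro j hj
    have hjM : j ≤ M := by simpa [Nat.lt_succ_iff] using hj
    rw [show m + 2 + M - (m + j) - 1 = M - j + 1 from by omega]
    push_cast
    ring
  rw [Finset.sum_congr rfl hterm, ← Finset.mul_sum, main_sum m M, df_even]
  push_cast
  ring
end

section
/- For every integer n ≥ 2, Σ_{k=0}^{n-2} (n-k)²·(n-k-1)·(n+k-2)!/(k!·2^k) = (n-1)!·2^(n-1)·(−1 + (2n-1)!!/(2^(n-2)·(n-1)!)) = 2·(2n-1)!! − (2n-2)!!. -/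
section AuxStmt18
open Finset

lemma sum_choose_shift (M s : ℕ) :
    ∑ k ∈ range s, (M + k).choose k * 2 ^ (s - 1 - k)
      = ∑ j ∈ range s, (M + s).choose j := by
  induction s with
  | zero => simp
  | succ s ih =>
    have hL : ∑ k ∈ range (s+1), (M + k).choose k * 2 ^ (s + 1 - 1 - k)
        = 2 * (∑ k ∈ range s, (M + k).choose k * 2 ^ (s - 1 - k)) + (M+s).choose s := by
      rw [sum_range_succ, Finset.mul_sum]
      congr 1
      · apply sum_congr rfl
        intro k hk
        have hk' : k < s := mem_range.mp hk
        have : s + 1 - 1 - k = (s - 1 - k) + 1 := by omega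
        rw [this]; ring
      · have : s + 1 - 1 - s = 0 := by omega
        rw [this]; ring
    rw [hL, ih]
    have hR : ∑ j ∈ range (s+1), (M + (s+1)).choose j
        = ∑ j ∈ range s, (M+s).choose j + ∑ j ∈ range (s+1), (M+s).choose j := by
      rw [sum_range_succ' (fun j => (M + (s+1)).choose j)]
      rw [sum_range_succ' (fun j => (M + s).choose j)]
      have : ∀ j, (M + (s+1)).choose (j+1) = (M+s).choose j + (M+s).choose (j+1) := by
        intro j
        have : M + (s+1) = (M+s) + 1 := by omega
        rw [this, Nat.choose_succ_succ]
      simp only [this]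
      rw [Finset.sum_add_distrib]
      simp [Nat.choose_zero_right]
      omega
    rw [hR, sum_range_succ]
    ring

lemma J1 (m k : ℕ) : (k+1) * (m+k+1).choose (k+1) = (m+1) * (m+k+1).choose k := by
  have h1 : (m+k+1) * (m+k).choose k = (m+k+1).choose (k+1) * (k+1) := by
    have := Nat.add_one_mul_choose_eq (m+k) k
    simpa [Nat.succ_eq_add_one] using this
  have h2 : (m+k+1) * (m+k).choose m = (m+k+1).choose (m+1) * (m+1) := by
    have := Nat.add_one_mul_choose_eq (m+k) m
    simpa [Nat.succ_eq_add_one, Nat.add_comm, Nat.add_assoc, Nat.add_left_comm] using this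
  have hsym : (m+k).choose k = (m+k).choose m := by
    rw [← Nat.choose_symm (by omega : m ≤ m + k)]
    congr 1; omega
  have hsym2 : (m+k+1).choose (m+1) = (m+k+1).choose k := by
    rw [← Nat.choose_symm (by omega : m+1 ≤ m + k + 1)]
    congr 1; omega
  have h2' : (m+k+1) * (m+k).choose m = (m+k+1) * (m+k).choose m := rfl
  -- combine
  have : (m+k+1).choose (k+1) * (k+1) = (m+k+1).choose (m+1) * (m+1) := by
    rw [← h1, hsym, h2]
  rw [hsym2] at this
  calc (k+1) * (m+k+1).choose (k+1) = (m+k+1).choose (k+1) * (k+1) := Nat.mul_comm _ _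
    _ = (m+k+1).choose k * (m+1) := this
    _ = (m+1) * (m+k+1).choose k := Nat.mul_comm _ _

lemma lemW0 (p : ℕ) :
    ∑ k ∈ range (p+3), (p+2+k).choose k * 2 ^ (p+2-k) = 4 ^ (p+2) := by
  have h := sum_choose_shift (p+2) (p+3)
  have e1 : ∀ k : ℕ, p + 3 - 1 - k = p + 2 - k := by omega
  simp only [e1] at h
  have e2 : p + 2 + (p+3) = 2 * (p+2) + 1 := by omega
  rw [e2] at h
  rw [h]
  exact Nat.sum_range_choose_halfway (p+2)

lemma halfsum (p : ℕ) : ∑ j ∈ range (p+3), (2*p+5).choose j = 4 ^ (p+2) := by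
  have := Nat.sum_range_choose_halfway (p+2)
  have e : 2 * (p+2) + 1 = 2*p+5 := by omega
  rwa [e] at this

lemma lemW1 (p : ℕ) :
    (∑ k ∈ range (p+3), k * ((p+2+k).choose k) * 2 ^ (p+2-k))
      + (p+3) * (2*p+5).choose (p+2) = (p+3) * 4 ^ (p+2) := by
  have hpeel : ∑ k ∈ range (p+3), k * ((p+2+k).choose k) * 2 ^ (p+2-k)
      = ∑ k ∈ range (p+2), (k+1) * ((p+3+k).choose (k+1)) * 2 ^ (p+1-k) := by
    rw [sum_range_succ' (fun k => k * ((p+2+k).choose k) * 2 ^ (p+2-k)) (p+2)]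
    simp only [Nat.zero_mul, Nat.add_zero, add_zero, zero_mul]
    apply sum_congr rfl
    intro k _
    have e1 : p + 2 + (k+1) = p+3+k := by omega
    have e2 : p + 2 - (k+1) = p+1-k := by omega
    rw [e1, e2]
  have hterm : ∀ k, (k+1) * ((p+3+k).choose (k+1)) * 2 ^ (p+1-k)
      = (p+3) * (((p+3)+k).choose k * 2 ^ (p+2-1-k)) := by
    intro k
    have := J1 (p+2) k
    have e1 : p+2+k+1 = p+3+k := by omega
    rw [e1] at this
    have e2 : p+2-1-k = p+1-k := by omega
    rw [e2, ← Nat.mul_assoc, this]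
  have hshift := sum_choose_shift (p+3) (p+2)
  have e3 : p+3+(p+2) = 2*p+5 := by omega
  rw [e3] at hshift
  calc (∑ k ∈ range (p+3), k * ((p+2+k).choose k) * 2 ^ (p+2-k))
        + (p+3) * (2*p+5).choose (p+2)
      = (p+3) * (∑ k ∈ range (p+2), ((p+3)+k).choose k * 2 ^ (p+2-1-k))
        + (p+3) * (2*p+5).choose (p+2) := by
        rw [hpeel, Finset.mul_sum]
        congr 1
        exact sum_congr rfl fun k _ => hterm k
    _ = (p+3) * (∑ j ∈ range (p+2), (2*p+5).choose j + (2*p+5).choose (p+2)) := by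
        rw [hshift]; ring
    _ = (p+3) * 4 ^ (p+2) := by
        rw [← sum_range_succ (fun j => (2*p+5).choose j) (p+2), halfsum]

lemma lemW2 (p : ℕ) :
    (∑ k ∈ range (p+3), (k*(k-1)) * ((p+2+k).choose k) * 2 ^ (p+2-k))
      + (p+3) * (p+4) * ((2*p+5).choose (p+2) + (2*p+5).choose (p+1))
      = (p+3) * (p+4) * 4 ^ (p+2) := by
  have hpeel : ∑ k ∈ range (p+3), (k*(k-1)) * ((p+2+k).choose k) * 2 ^ (p+2-k)
      = ∑ k ∈ range (p+1), ((k+2)*(k+1)) * ((p+4+k).choose (k+2)) * 2 ^ (p-k) := by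
    rw [sum_range_succ' (fun k => (k*(k-1)) * ((p+2+k).choose k) * 2 ^ (p+2-k)) (p+2)]
    rw [sum_range_succ' (fun k => ((k+1)*(k+1-1)) * ((p+2+(k+1)).choose (k+1)) * 2 ^ (p+2-(k+1))) (p+1)]
    simp only [Nat.zero_mul, Nat.mul_zero, add_zero, zero_mul, Nat.sub_self, Nat.mul_one]
    norm_num
    apply sum_congr rfl
    intro k _
    have e1 : p + 2 + (k+1+1) = p+4+k := by omega
    have e2 : p + 2 - (k+1+1) = p-k := by omega
    rw [e1, e2]
  have hterm : ∀ k, ((k+2)*(k+1)) * ((p+4+k).choose (k+2)) * 2 ^ (p-k)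
      = (p+3) * (p+4) * (((p+4)+k).choose k * 2 ^ (p+1-1-k)) := by
    intro k
    have h1 := J1 (p+2) (k+1)
    have e1 : p+2+(k+1)+1 = p+4+k := by omega
    rw [e1] at h1
    have h2 := J1 (p+3) k
    have e2 : p+3+k+1 = p+4+k := by omega
    rw [e2] at h2
    have e3 : p+1-1-k = p-k := by omega
    rw [e3]
    calc ((k+2)*(k+1)) * ((p+4+k).choose (k+2)) * 2 ^ (p-k)
        = (k+1) * ((k+2) * ((p+4+k).choose (k+1+1))) * 2 ^ (p-k) := by ring_nf
      _ = (k+1) * ((p+3) * ((p+4+k).choose (k+1))) * 2 ^ (p-k) := by rw [h1]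
      _ = (p+3) * ((k+1) * ((p+4+k).choose (k+1))) * 2 ^ (p-k) := by ring
      _ = (p+3) * ((p+4) * ((p+4+k).choose k)) * 2 ^ (p-k) := by rw [h2]
      _ = (p+3) * (p+4) * (((p+4)+k).choose k * 2 ^ (p-k)) := by ring
  have hshift := sum_choose_shift (p+4) (p+1)
  have e3 : p+4+(p+1) = 2*p+5 := by omega
  rw [e3] at hshift
  calc (∑ k ∈ range (p+3), (k*(k-1)) * ((p+2+k).choose k) * 2 ^ (p+2-k))
        + (p+3) * (p+4) * ((2*p+5).choose (p+2) + (2*p+5).choose (p+1))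
      = (p+3) * (p+4) * (∑ k ∈ range (p+1), ((p+4)+k).choose k * 2 ^ (p+1-1-k))
        + (p+3) * (p+4) * ((2*p+5).choose (p+2) + (2*p+5).choose (p+1)) := by
        rw [hpeel, Finset.mul_sum]
        congr 1
        exact sum_congr rfl fun k _ => hterm k
    _ = (p+3) * (p+4) * ((∑ j ∈ range (p+1), (2*p+5).choose j + (2*p+5).choose (p+1))
          + (2*p+5).choose (p+2)) := by
        rw [hshift]; ring
    _ = (p+3) * (p+4) * 4 ^ (p+2) := by
        rw [← sum_range_succ (fun j => (2*p+5).choose j) (p+1),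
            ← sum_range_succ (fun j => (2*p+5).choose j) (p+2), halfsum]

lemma lemW3 (p : ℕ) :
    (∑ k ∈ range (p+3), (k*(k-1)*(k-2)) * ((p+2+k).choose k) * 2 ^ (p+2-k))
      + (p+3) * (p+4) * (p+5) *
        ((2*p+5).choose (p+2) + (2*p+5).choose (p+1) + (2*p+5).choose p)
      = (p+3) * (p+4) * (p+5) * 4 ^ (p+2) := by
  have hpeel : ∑ k ∈ range (p+3), (k*(k-1)*(k-2)) * ((p+2+k).choose k) * 2 ^ (p+2-k)
      = ∑ k ∈ range p, ((k+3)*(k+2)*(k+1)) * ((p+5+k).choose (k+3)) * 2 ^ (p-1-k) := by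
    rw [sum_range_succ' (fun k => (k*(k-1)*(k-2)) * ((p+2+k).choose k) * 2 ^ (p+2-k)) (p+2)]
    rw [sum_range_succ' (fun k => (((k+1))*((k+1)-1)*((k+1)-2)) * ((p+2+(k+1)).choose (k+1)) * 2 ^ (p+2-(k+1))) (p+1)]
    rw [sum_range_succ' (fun k => (((k+1+1))*((k+1+1)-1)*((k+1+1)-2)) * ((p+2+(k+1+1)).choose (k+1+1)) * 2 ^ (p+2-(k+1+1))) p]
    norm_num
    apply sum_congr rfl
    intro k _
    have e1 : p + 2 + (k+1+1+1) = p+5+k := by omega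
    have e2 : p + 2 - (k+1+1+1) = p-1-k := by omega
    have e3 : k+1+1+1 = k+3 := by omega
    have e4 : k+3-2 = k+1 := by omega
    have e5 : k+1+1 = k+2 := by omega
    rw [e1, e2, e3, e4, e5]
  have hterm : ∀ k, ((k+3)*(k+2)*(k+1)) * ((p+5+k).choose (k+3)) * 2 ^ (p-1-k)
      = (p+3) * (p+4) * (p+5) * (((p+5)+k).choose k * 2 ^ (p-1-k)) := by
    intro k
    have h1 := J1 (p+2) (k+2)
    have e1 : p+2+(k+2)+1 = p+5+k := by omega
    rw [e1] at h1
    have h2 := J1 (p+3) (k+1)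
    have e2 : p+3+(k+1)+1 = p+5+k := by omega
    rw [e2] at h2
    have h3 := J1 (p+4) k
    have e3 : p+4+k+1 = p+5+k := by omega
    rw [e3] at h3
    calc ((k+3)*(k+2)*(k+1)) * ((p+5+k).choose (k+3)) * 2 ^ (p-1-k)
        = (k+2) * (k+1) * ((k+3) * ((p+5+k).choose (k+2+1))) * 2 ^ (p-1-k) := by ring_nf
      _ = (k+2) * (k+1) * ((p+3) * ((p+5+k).choose (k+2))) * 2 ^ (p-1-k) := by rw [h1]
      _ = (p+3) * (k+1) * ((k+2) * ((p+5+k).choose (k+1+1))) * 2 ^ (p-1-k) := by ring_nf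
      _ = (p+3) * (k+1) * ((p+4) * ((p+5+k).choose (k+1))) * 2 ^ (p-1-k) := by rw [h2]
      _ = (p+3) * (p+4) * ((k+1) * ((p+5+k).choose (k+1))) * 2 ^ (p-1-k) := by ring
      _ = (p+3) * (p+4) * ((p+5) * ((p+5+k).choose k)) * 2 ^ (p-1-k) := by rw [h3]
      _ = (p+3) * (p+4) * (p+5) * (((p+5)+k).choose k * 2 ^ (p-1-k)) := by ring
  have hshift := sum_choose_shift (p+5) p
  have e3 : p+5+p = 2*p+5 := by omega
  rw [e3] at hshift
  calc (∑ k ∈ range (p+3), (k*(k-1)*(k-2)) * ((p+2+k).choose k) * 2 ^ (p+2-k))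
        + (p+3) * (p+4) * (p+5) *
          ((2*p+5).choose (p+2) + (2*p+5).choose (p+1) + (2*p+5).choose p)
      = (p+3) * (p+4) * (p+5) * (∑ k ∈ range p, ((p+5)+k).choose k * 2 ^ (p-1-k))
        + (p+3) * (p+4) * (p+5) *
          ((2*p+5).choose (p+2) + (2*p+5).choose (p+1) + (2*p+5).choose p) := by
        rw [hpeel, Finset.mul_sum]
        congr 1
        exact sum_congr rfl fun k _ => hterm k
    _ = (p+3) * (p+4) * (p+5) * ((((∑ j ∈ range p, (2*p+5).choose j) + (2*p+5).choose p)
          + (2*p+5).choose (p+1)) + (2*p+5).choose (p+2)) := by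
        rw [hshift]; ring
    _ = (p+3) * (p+4) * (p+5) * 4 ^ (p+2) := by
        rw [← sum_range_succ (fun j => (2*p+5).choose j) p,
            ← sum_range_succ (fun j => (2*p+5).choose j) (p+1),
            ← sum_range_succ (fun j => (2*p+5).choose j) (p+2), halfsum]

lemma point (p k : ℕ) (hk : k ≤ p+2) :
    (p+4-k)^2*(p+3-k) + (p+3)*(3*p+10)*k + k*(k-1)*(k-2)
      = (p+4)^2*(p+3) + (3*p+8)*(k*(k-1)) := by
  match k with
  | 0 => simp
  | 1 =>
    have e1 : p+4-1 = p+3 := by omega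
    have e2 : p+3-1 = p+2 := by omega
    rw [e1, e2]
    norm_num
    ring
  | (j+2) =>
    obtain ⟨d, rfl⟩ : ∃ d, p = j + d := ⟨p - j, by omega⟩
    have e1 : j+d+4-(j+2) = d+2 := by omega
    have e2 : j+d+3-(j+2) = d+1 := by omega
    have e3 : j+2-1 = j+1 := by omega
    have e4 : j+2-2 = j := by omega
    rw [e1, e2, e3, e4]
    ring

lemma combine (p N S0 S1 S2 S3 X0 X1 X2 F : ℤ)
    (Hdec : N + (p+3)*(3*p+10)*S1 + S3 = (p+4)^2*(p+3)*S0 + (3*p+8)*S2)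
    (H0 : S0 = F) (H1 : S1 + (p+3)*X2 = (p+3)*F)
    (H2 : S2 + (p+3)*(p+4)*(X2+X1) = (p+3)*(p+4)*F)
    (H3 : S3 + (p+3)*(p+4)*(p+5)*(X2+X1+X0) = (p+3)*(p+4)*(p+5)*F)
    (R1 : X2*(p+2) = X1*(p+4)) (R2 : X1*(p+1) = X0*(p+5)) :
    N + 2*(p+3)*F = 2*(2*p+7)*(p+3)*X2 := by
  linear_combination Hdec + (p+4)^2*(p+3)*H0 - (p+3)*(3*p+10)*H1 + (3*p+8)*H2
    - H3 + (p+2)*(p+3)*R1 - (p+3)*(p+4)*R2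

lemma keyB (p : ℕ) :
    (∑ k ∈ range (p+3), ((p+4-k)^2*(p+3-k)) * ((p+2+k).choose k) * 2 ^ (p+2-k))
      + 2*(p+3) * 4 ^ (p+2) = 2*(2*p+7)*(p+3) * ((2*p+5).choose (p+2)) := by
  have Hdec : (∑ k ∈ range (p+3), ((p+4-k)^2*(p+3-k)) * ((p+2+k).choose k) * 2 ^ (p+2-k))
      + (p+3)*(3*p+10) * (∑ k ∈ range (p+3), k * ((p+2+k).choose k) * 2 ^ (p+2-k))
      + (∑ k ∈ range (p+3), (k*(k-1)*(k-2)) * ((p+2+k).choose k) * 2 ^ (p+2-k))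
      = (p+4)^2*(p+3) * (∑ k ∈ range (p+3), (p+2+k).choose k * 2 ^ (p+2-k))
      + (3*p+8) * (∑ k ∈ range (p+3), (k*(k-1)) * ((p+2+k).choose k) * 2 ^ (p+2-k)) := by
    rw [Finset.mul_sum, Finset.mul_sum, Finset.mul_sum, ← Finset.sum_add_distrib,
      ← Finset.sum_add_distrib, ← Finset.sum_add_distrib]
    apply sum_congr rfl
    intro k hk
    have hkk := mem_range.mp hk
    have hpt := point p k (by omega)
    calc ((p+4-k)^2*(p+3-k)) * ((p+2+k).choose k) * 2 ^ (p+2-k)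
          + (p+3)*(3*p+10) * (k * ((p+2+k).choose k) * 2 ^ (p+2-k))
          + (k*(k-1)*(k-2)) * ((p+2+k).choose k) * 2 ^ (p+2-k)
        = ((p+4-k)^2*(p+3-k) + (p+3)*(3*p+10)*k + k*(k-1)*(k-2))
            * (((p+2+k).choose k) * 2 ^ (p+2-k)) := by ring
      _ = ((p+4)^2*(p+3) + (3*p+8)*(k*(k-1))) * (((p+2+k).choose k) * 2 ^ (p+2-k)) := by
          rw [hpt]
      _ = (p+4)^2*(p+3) * ((p+2+k).choose k * 2 ^ (p+2-k))
          + (3*p+8) * ((k*(k-1)) * ((p+2+k).choose k) * 2 ^ (p+2-k)) := by ring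
  have R1 : (2*p+5).choose (p+2) * (p+2) = (2*p+5).choose (p+1) * (p+4) := by
    have h := Nat.choose_succ_right_eq (2*p+5) (p+1)
    have e : 2*p+5-(p+1) = p+4 := by omega
    rw [e] at h
    exact h
  have R2 : (2*p+5).choose (p+1) * (p+1) = (2*p+5).choose p * (p+5) := by
    have h := Nat.choose_succ_right_eq (2*p+5) p
    have e : 2*p+5-p = p+5 := by omega
    rw [e] at h
    exact h
  have H0 := lemW0 p
  have H1 := lemW1 p
  have H2 := lemW2 p
  have H3 := lemW3 p
  have final := combine (p : ℤ)
    ((∑ k ∈ range (p+3), ((p+4-k)^2*(p+3-k)) * ((p+2+k).choose k) * 2 ^ (p+2-k) : ℕ) : ℤ)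
    ((∑ k ∈ range (p+3), (p+2+k).choose k * 2 ^ (p+2-k) : ℕ) : ℤ)
    ((∑ k ∈ range (p+3), k * ((p+2+k).choose k) * 2 ^ (p+2-k) : ℕ) : ℤ)
    ((∑ k ∈ range (p+3), (k*(k-1)) * ((p+2+k).choose k) * 2 ^ (p+2-k) : ℕ) : ℤ)
    ((∑ k ∈ range (p+3), (k*(k-1)*(k-2)) * ((p+2+k).choose k) * 2 ^ (p+2-k) : ℕ) : ℤ)
    (((2*p+5).choose p : ℕ) : ℤ) (((2*p+5).choose (p+1) : ℕ) : ℤ)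
    (((2*p+5).choose (p+2) : ℕ) : ℤ) ((4 ^ (p+2) : ℕ) : ℤ)
    (by exact_mod_cast Hdec) (by exact_mod_cast H0) (by exact_mod_cast H1)
    (by exact_mod_cast H2) (by exact_mod_cast H3)
    (by exact_mod_cast R1) (by exact_mod_cast R2)
  exact_mod_cast final


lemma df_even_s18 (j : ℕ) : df (2*j) = 2^j * j.factorial := by
  induction j with
  | zero => rfl
  | succ j ih =>
    have e : 2*(j+1) = 2*j+2 := by omega
    rw [e, show df (2*j+2) = (2*j+2) * df (2*j) from rfl, ih, Nat.factorial_succ]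
    ring

lemma df_odd_s18 (j : ℕ) : df (2*j+1) * (2^j * j.factorial) = (2*j+1).factorial := by
  induction j with
  | zero => rfl
  | succ j ih =>
    have e : 2*(j+1)+1 = (2*j+1)+2 := by omega
    rw [e, show df ((2*j+1)+2) = ((2*j+1)+2) * df (2*j+1) from rfl]
    have hf : ((2*j+1)+2).factorial = ((2*j+1)+2) * (((2*j+1)+1) * (2*j+1).factorial) := by
      rw [Nat.factorial_succ, Nat.factorial_succ]
    rw [hf, Nat.factorial_succ, ← ih]
    ring

lemma hchoose_real (p k : ℕ) : (((p+2+k).choose k : ℕ) : ℝ)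
    = ((p+2+k).factorial : ℝ) / ((k.factorial : ℝ) * ((p+2).factorial : ℝ)) := by
  have h := Nat.choose_mul_factorial_mul_factorial (show k ≤ p+2+k by omega)
  rw [show p+2+k-k = p+2 from by omega] at h
  have h' : (((p+2+k).choose k : ℕ) : ℝ) * (k.factorial : ℝ) * ((p+2).factorial : ℝ)
      = ((p+2+k).factorial : ℝ) := by exact_mod_cast h
  field_simp [Nat.factorial_ne_zero] at h' ⊢
  linarith [h']

lemma main_sum_s18 (p : ℕ) :
    ∑ k ∈ range (p+3), ((p+4-k : ℕ) : ℝ)^2 * ((p+3-k : ℕ) : ℝ)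
        * ((p+2+k).factorial : ℝ) / ((k.factorial : ℝ) * 2^k)
      = 2 * (df (2*p+7) : ℝ) - (df (2*p+6) : ℝ) := by
  have hX2 : (((2*p+5).choose (p+2) : ℕ) : ℝ)
      = ((2*p+5).factorial : ℝ) / (((p+2).factorial : ℝ) * ((p+3).factorial : ℝ)) := by
    have h := Nat.choose_mul_factorial_mul_factorial (show p+2 ≤ 2*p+5 by omega)
    rw [show 2*p+5-(p+2) = p+3 from by omega] at h
    have h' : (((2*p+5).choose (p+2) : ℕ) : ℝ) * ((p+2).factorial : ℝ) * ((p+3).factorial : ℝ)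
        = ((2*p+5).factorial : ℝ) := by exact_mod_cast h
    field_simp [Nat.factorial_ne_zero] at h' ⊢
    linarith [h']
  have hdfe : (df (2*p+6) : ℝ) = 2^(p+3) * ((p+3).factorial : ℝ) := by
    have := df_even_s18 (p+3)
    rw [show 2*(p+3) = 2*p+6 from by omega] at this
    exact_mod_cast this
  have hdfo : (df (2*p+7) : ℝ) = ((2*p+7).factorial : ℝ) / (2^(p+3) * ((p+3).factorial : ℝ)) := by
    have := df_odd_s18 (p+3)
    rw [show 2*(p+3)+1 = 2*p+7 from by omega] at this
    have h' : (df (2*p+7) : ℝ) * (2^(p+3) * ((p+3).factorial : ℝ)) = ((2*p+7).factorial : ℝ) := by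
      exact_mod_cast this
    field_simp [Nat.factorial_ne_zero] at h' ⊢
    linarith [h']
  have hf7 : ((2*p+7).factorial : ℝ) = (2*(p:ℝ)+7) * (2*(p:ℝ)+6) * ((2*p+5).factorial : ℝ) := by
    rw [show 2*p+7 = (2*p+6)+1 from by omega, Nat.factorial_succ,
        show 2*p+6 = (2*p+5)+1 from by omega, Nat.factorial_succ]
    push_cast
    ring
  have hsum : ∑ k ∈ range (p+3), ((p+4-k : ℕ) : ℝ)^2 * ((p+3-k : ℕ) : ℝ)
        * ((p+2+k).factorial : ℝ) / ((k.factorial : ℝ) * 2^k)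
      = ((p+2).factorial : ℝ) / 2^(p+2) *
        ((∑ k ∈ range (p+3), ((p+4-k)^2*(p+3-k)) * ((p+2+k).choose k) * 2 ^ (p+2-k) : ℕ) : ℝ) := by
    rw [Nat.cast_sum, Finset.mul_sum]
    apply sum_congr rfl
    intro k hk
    have hk' : k ≤ p+2 := by have := mem_range.mp hk; omega
    have h2 : (2:ℝ)^(p+2-k) = 2^(p+2) / 2^k := by
      rw [eq_div_iff (by positivity), ← pow_add]
      congr 1
      omega
    push_cast [hchoose_real p k, h2]
    have hkne : ((k.factorial : ℕ) : ℝ) ≠ 0 := by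
      exact_mod_cast (Nat.factorial_ne_zero k)
    have hpne : (((p+2).factorial : ℕ) : ℝ) ≠ 0 := by
      exact_mod_cast (Nat.factorial_ne_zero (p+2))
    field_simp
  have hkeyB : ((∑ k ∈ range (p+3), ((p+4-k)^2*(p+3-k)) * ((p+2+k).choose k) * 2 ^ (p+2-k) : ℕ) : ℝ)
      = 2*(2*(p:ℝ)+7)*((p:ℝ)+3) * (((2*p+5).choose (p+2) : ℕ) : ℝ) - 2*((p:ℝ)+3) * 4^(p+2) := by
    have h := keyB p
    have h' : ((∑ k ∈ range (p+3), ((p+4-k)^2*(p+3-k)) * ((p+2+k).choose k) * 2 ^ (p+2-k) : ℕ) : ℝ)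
        + 2*((p:ℝ)+3) * 4^(p+2) = 2*(2*(p:ℝ)+7)*((p:ℝ)+3) * (((2*p+5).choose (p+2) : ℕ) : ℝ) := by
      exact_mod_cast h
    linarith [h']
  rw [hsum, hkeyB, hX2, hdfe, hdfo, hf7]
  have hpne : (((p+2).factorial : ℕ) : ℝ) ≠ 0 := by exact_mod_cast (Nat.factorial_ne_zero (p+2))
  have hpne3 : (((p+3).factorial : ℕ) : ℝ) ≠ 0 := by exact_mod_cast (Nat.factorial_ne_zero (p+3))
  have h4 : (4:ℝ)^(p+2) = 2^(p+2) * 2^(p+2) := by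
    rw [← mul_pow]; norm_num
  have hfs : (((p+3).factorial : ℕ) : ℝ) = ((p:ℝ)+3) * (((p+2).factorial : ℕ) : ℝ) := by
    rw [show p+3 = (p+2)+1 from rfl, Nat.factorial_succ]
    push_cast
    ring
  rw [h4, hfs]
  field_simp
  ring

end AuxStmt18

/-- Σ_{k=0}^{n-2} (n-k)²(n-k-1)(n+k-2)!/(k!·2^k)
  = (n-1)!·2^(n-1)·(−1 + (2n-1)‼/(2^(n-2)(n-1)!)) = 2·(2n-1)‼ − (2n-2)‼. -/
theorem stmt18 (n : ℕ) (hn : 2 ≤ n) :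
    (∑ k ∈ Finset.range (n - 1),
        ((n - k : ℕ) : ℝ) ^ 2 * ((n - k - 1 : ℕ) : ℝ) *
          (Nat.factorial (n + k - 2) : ℝ) /
          ((Nat.factorial k : ℝ) * 2 ^ k)
      = (Nat.factorial (n - 1) : ℝ) * 2 ^ (n - 1) *
          (-1 + (df (2 * n - 1) : ℝ) /
            (2 ^ (n - 2) * (Nat.factorial (n - 1) : ℝ)))) ∧
    (∑ k ∈ Finset.range (n - 1),
        ((n - k : ℕ) : ℝ) ^ 2 * ((n - k - 1 : ℕ) : ℝ) *
          (Nat.factorial (n + k - 2) : ℝ) /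
          ((Nat.factorial k : ℝ) * 2 ^ k)
      = 2 * (df (2 * n - 1) : ℝ) - (df (2 * n - 2) : ℝ)) := by
  have d2 : df 2 = 2 := rfl
  have d3 : df 3 = 3 := rfl
  have d4 : df 4 = 8 := rfl
  have d5 : df 5 = 15 := rfl
  rcases (show n = 2 ∨ n = 3 ∨ 4 ≤ n from by omega) with rfl | rfl | h4
  · constructor <;> norm_num [Finset.sum_range_succ, d2, d3]
  · constructor <;> norm_num [Finset.sum_range_succ, d4, d5, Nat.factorial]
  · obtain ⟨p, rfl⟩ : ∃ p, n = p + 4 := ⟨n - 4, by omega⟩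
    simp only [show p+4-1 = p+3 from by omega,
      show ∀ k : ℕ, p+4-k-1 = p+3-k from fun k => by omega,
      show ∀ k : ℕ, p+4+k-2 = p+2+k from fun k => by omega,
      show 2*(p+4)-1 = 2*p+7 from by omega,
      show 2*(p+4)-2 = 2*p+6 from by omega,
      show p+4-2 = p+2 from by omega]
    have hdfe : (df (2*p+6) : ℝ) = 2^(p+3) * ((p+3).factorial : ℝ) := by
      have := df_even_s18 (p+3)
      rw [show 2*(p+3) = 2*p+6 from by omega] at this
      exact_mod_cast this
    have hpne3 : (((p+3).factorial : ℕ) : ℝ) ≠ 0 := by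
      exact_mod_cast (Nat.factorial_ne_zero (p+3))
    constructor
    · rw [main_sum_s18 p, hdfe]
      field_simp
      ring
    · exact main_sum_s18 p
end
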